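/- arXiv:2402.11174 — 6 statements merged into one kernel-verified Lean document; each statement's English description precedes it below -/
import Mathlib

section
/- Let (X,d,m) be a metric measure space, p ≥ 1, and let (ρ_n)_{n∈ℕ} be nonnegative symmetric Borel mollifiers on {(x,y) : x ≠ y} satisfying parts (A) (with constant L) and (C) of Assumption 1. Fix x₀ ∈ X and u ∈ L^p(X,m), and for R > 0, n ∈ ℕ set II_a(R,n) := ∫_X |u(y)|^p ( ∫_{{x : d(x,y) ≥ R and d(y,x₀) > 2 d(x,x₀)}} ρ_n(x,y) dm(x) ) dm(y). Then lim_{R→∞} limsup_{n→∞} II_a(R,n) = 0. -/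
open MeasureTheory Filter Topology Metric Set ENNReal

/-- Estimate (2.4) in the proof of the generalized Maz'ya–Shaposhnikova formula:
the term `II_a(R,n)` satisfies `lim_{R→∞} limsup_{n→∞} II_a(R,n) = 0`. -/
theorem IIa_limsup_zero
    {X : Type*} [MetricSpace X] [CompleteSpace X] [TopologicalSpace.SeparableSpace X]
    [MeasurableSpace X] [BorelSpace X]
    (μ : Measure X) [IsLocallyFiniteMeasure μ] [μ.IsOpenPosMeasure]
    (p : ℝ) (hp : 1 ≤ p)
    (ρ : ℕ → X → X → ℝ≥0∞)
    (hmeas : ∀ n, Measurable (Function.uncurry (ρ n)))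
    (hsymm : ∀ n x y, ρ n x y = ρ n y x)
    (L : ℝ) (hL : 0 ≤ L)
    -- Assumption 1 (A)
    (hA : ∀ x : X,
      Tendsto (fun R : ℝ =>
          limsup (fun n => ∫⁻ y in {y | R ≤ dist x y}, ρ n x y ∂μ) atTop)
        atTop (nhds (ENNReal.ofReal L)) ∧
      Tendsto (fun R : ℝ =>
          liminf (fun n => ∫⁻ y in {y | R ≤ dist x y}, ρ n x y ∂μ) atTop)
        atTop (nhds (ENNReal.ofReal L)))
    -- Assumption 1 (C)
    (hC : ∀ᶠ R : ℝ in atTop, ∃ C : ℝ≥0∞, C < ⊤ ∧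
      ∀ (x : X) (n : ℕ), ∫⁻ y in {y | R ≤ dist x y}, ρ n x y ∂μ ≤ C)
    (x₀ : X) (u : X → ℝ) (hu : MemLp u (ENNReal.ofReal p) μ) :
    Tendsto (fun R : ℝ =>
        limsup (fun n =>
          ∫⁻ y, ENNReal.ofReal (|u y| ^ p) *
            (∫⁻ x in {x | R ≤ dist x y ∧ 2 * dist x x₀ < dist y x₀}, ρ n x y ∂μ) ∂μ) atTop)
      atTop (nhds 0) := by

  -- notation
  set g : X → ℝ≥0∞ := fun y => ENNReal.ofReal (|u y| ^ p) with hg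
  have hp0 : (0:ℝ) < p := by linarith
  -- finiteness of ∫ g
  have hgfin : ∫⁻ y, g y ∂μ < ⊤ := by
    have hint : Integrable (fun y => ‖u y‖ ^ (ENNReal.ofReal p).toReal) μ :=
      hu.integrable_norm_rpow (ENNReal.ofReal_pos.2 hp0).ne' (by simp)
    have h2 := hint.lintegral_lt_top
    have hpt : (ENNReal.ofReal p).toReal = p := ENNReal.toReal_ofReal hp0.le
    simpa [hg, hpt, Real.norm_eq_abs, abs_of_nonneg (Real.rpow_nonneg (abs_nonneg _) p)]
      using h2
  obtain ⟨R₀, hR₀⟩ := eventually_atTop.1 hC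
  obtain ⟨C, hClt, hCb⟩ := hR₀ R₀ le_rfl
  -- the measure with density g
  set ν : Measure X := μ.withDensity g with hν
  have hνfin : ν univ < ⊤ := by
    rw [hν, withDensity_apply _ MeasurableSet.univ]
    simpa using hgfin
  have hSmeas : ∀ r : ℝ, MeasurableSet {y : X | r ≤ dist y x₀} :=
    fun r => measurableSet_le measurable_const ((continuous_id.dist continuous_const).measurable)
  -- the dominating function
  set F : ℝ → ℝ≥0∞ := fun R => (∫⁻ y in {y : X | 2 * R / 3 ≤ dist y x₀}, g y ∂μ) * C with hF
  -- key pointwise bound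
  have key : ∀ R, R₀ ≤ R → ∀ n : ℕ,
      (∫⁻ y, g y * (∫⁻ x in {x | R ≤ dist x y ∧ 2 * dist x x₀ < dist y x₀}, ρ n x y ∂μ) ∂μ)
        ≤ F R := by
    intro R hR n
    have hpt : ∀ y : X,
        g y * (∫⁻ x in {x | R ≤ dist x y ∧ 2 * dist x x₀ < dist y x₀}, ρ n x y ∂μ)
          ≤ ({y : X | 2 * R / 3 ≤ dist y x₀}).indicator (fun y => g y * C) y := by
      intro y
      by_cases hy : 2 * R / 3 ≤ dist y x₀
      · rw [Set.indicator_apply, if_pos (show y ∈ {y : X | 2 * R / 3 ≤ dist y x₀} from hy)]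
        refine mul_le_mul_right ?_ _
        calc ∫⁻ x in {x | R ≤ dist x y ∧ 2 * dist x x₀ < dist y x₀}, ρ n x y ∂μ
            ≤ ∫⁻ x in {x : X | R₀ ≤ dist y x}, ρ n y x ∂μ := by
              have hsub : {x : X | R ≤ dist x y ∧ 2 * dist x x₀ < dist y x₀}
                  ⊆ {x : X | R₀ ≤ dist y x} := by
                intro x hx
                have : R ≤ dist x y := hx.1
                simp only [Set.mem_setOf_eq, dist_comm y x]
                linarith
              calc ∫⁻ x in {x | R ≤ dist x y ∧ 2 * dist x x₀ < dist y x₀}, ρ n x y ∂μ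
                  = ∫⁻ x in {x | R ≤ dist x y ∧ 2 * dist x x₀ < dist y x₀}, ρ n y x ∂μ := by
                    apply lintegral_congr
                    intro x; rw [hsymm]
                _ ≤ ∫⁻ x in {x : X | R₀ ≤ dist y x}, ρ n y x ∂μ :=
                    lintegral_mono_set hsub
          _ ≤ C := hCb y n
      · rw [Set.indicator_apply, if_neg (show y ∉ {y : X | 2 * R / 3 ≤ dist y x₀} from hy)]
        have hempty : {x : X | R ≤ dist x y ∧ 2 * dist x x₀ < dist y x₀} = ∅ := by
          ext x
          simp only [Set.mem_setOf_eq, Set.mem_empty_iff_false, iff_false, not_and]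
          intro h1 h2
          have htri : dist x y ≤ dist x x₀ + dist x₀ y := dist_triangle x x₀ y
          have hxy : dist x₀ y = dist y x₀ := dist_comm x₀ y
          push_neg at hy
          linarith
        rw [hempty]
        simp
    calc (∫⁻ y, g y * (∫⁻ x in {x | R ≤ dist x y ∧ 2 * dist x x₀ < dist y x₀}, ρ n x y ∂μ) ∂μ)
        ≤ ∫⁻ y, ({y : X | 2 * R / 3 ≤ dist y x₀}).indicator (fun y => g y * C) y ∂μ :=
          lintegral_mono hpt
      _ = ∫⁻ y in {y : X | 2 * R / 3 ≤ dist y x₀}, g y * C ∂μ :=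
          lintegral_indicator (hSmeas _) _
      _ = F R := lintegral_mul_const' C _ hClt.ne
  -- F tends to 0
  have hFlim : Tendsto F atTop (𝓝 0) := by
    have hν0 : Tendsto (fun R : ℝ => ∫⁻ y in {y : X | 2 * R / 3 ≤ dist y x₀}, g y ∂μ)
        atTop (𝓝 0) := by
      rw [ENNReal.tendsto_nhds_zero]
      intro ε hε
      -- a sequence of shrinking sets along ℕ
      have hseq : Tendsto (fun k : ℕ => ν {y : X | (k : ℝ) ≤ dist y x₀}) atTop
          (𝓝 (ν (⋂ k : ℕ, {y : X | (k : ℝ) ≤ dist y x₀}))) := by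
        apply tendsto_measure_iInter_atTop (fun k => (hSmeas _).nullMeasurableSet)
        · intro i j hij y hy
          exact le_trans (show (i : ℝ) ≤ (j : ℝ) by exact_mod_cast hij) hy
        · exact ⟨0, (lt_of_le_of_lt (measure_mono (Set.subset_univ _)) hνfin).ne⟩
      have hiInter : (⋂ k : ℕ, {y : X | (k : ℝ) ≤ dist y x₀}) = ∅ := by
        ext y
        simp only [Set.mem_iInter, Set.mem_setOf_eq, Set.mem_empty_iff_false, iff_false,
          not_forall, not_le]
        obtain ⟨k, hk⟩ := exists_nat_gt (dist y x₀)
        exact ⟨k, hk⟩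
      rw [hiInter] at hseq
      simp only [measure_empty] at hseq
      have := (ENNReal.tendsto_nhds_zero.1 hseq) ε hε
      obtain ⟨k, hk⟩ := eventually_atTop.1 this
      filter_upwards [eventually_ge_atTop (3 * (k : ℝ) / 2)] with R hRk
      have hsub : {y : X | 2 * R / 3 ≤ dist y x₀} ⊆ {y : X | (k : ℝ) ≤ dist y x₀} := by
        intro y hy
        simp only [Set.mem_setOf_eq] at hy ⊢
        linarith
      have hkk : ν {y : X | (k : ℝ) ≤ dist y x₀}
          = ∫⁻ y in {y : X | (k : ℝ) ≤ dist y x₀}, g y ∂μ :=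
        withDensity_apply g (hSmeas _)
      calc ∫⁻ y in {y : X | 2 * R / 3 ≤ dist y x₀}, g y ∂μ
          ≤ ∫⁻ y in {y : X | (k : ℝ) ≤ dist y x₀}, g y ∂μ := lintegral_mono_set hsub
        _ = ν {y : X | (k : ℝ) ≤ dist y x₀} := hkk.symm
        _ ≤ ε := hk k le_rfl
    have := ENNReal.Tendsto.mul_const hν0 (Or.inr hClt.ne)
    simpa using this
  -- squeeze
  apply tendsto_of_tendsto_of_tendsto_of_le_of_le' tendsto_const_nhds hFlim
  · exact Eventually.of_forall fun R => zero_le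
  · filter_upwards [eventually_ge_atTop R₀] with R hR
    apply limsup_le_of_le (by isBoundedDefault)
    exact Eventually.of_forall fun n => key R hR n
end

section
/- Let (X,d,m) be a metric measure space, p ≥ 1, and let (ρ_n)_{n∈ℕ} be nonnegative symmetric Borel mollifiers on {(x,y) : x ≠ y} satisfying parts (A) (with constant L) and (C) of Assumption 1. Fix x₀ ∈ X and u ∈ L^p(X,m), and for R > 0, n ∈ ℕ set II_b(R,n) := ∫_X |u(x)|^p ( ∫_{{y : d(x,y) ≥ R and d(y,x₀) > 2 d(x,x₀)}} ρ_n(x,y) dm(y) ) dm(x). Then lim_{R→∞} liminf_{n→∞} II_b(R,n) = lim_{R→∞} limsup_{n→∞} II_b(R,n) = L‖u‖_{L^p}^p. -/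
open MeasureTheory Filter Topology Metric Set ENNReal

private lemma IIb_liminf_const_mul_le (c : ℝ≥0∞) (f : ℕ → ℝ≥0∞) :
    c * Filter.liminf f Filter.atTop ≤ Filter.liminf (fun n => c * f n) Filter.atTop := by
  rw [Filter.liminf_eq_iSup_iInf_of_nat, Filter.liminf_eq_iSup_iInf_of_nat, ENNReal.mul_iSup]
  refine iSup_mono fun n => le_iInf₂ fun i hi => ?_
  exact mul_le_mul_right (iInf₂_le i hi) c

private lemma IIb_meas_param {X : Type*} [MeasurableSpace X] {μ : Measure X} [SFinite μ]
    {ρ : X → X → ℝ≥0∞} (hρ : Measurable (Function.uncurry ρ))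
    {P : X → X → Prop} (hP : MeasurableSet {q : X × X | P q.1 q.2}) :
    Measurable fun x => ∫⁻ y in {y | P x y}, ρ x y ∂μ := by
  have h1 : ∀ x, ∫⁻ y in {y | P x y}, ρ x y ∂μ
      = ∫⁻ y, Set.indicator {q : X × X | P q.1 q.2} (Function.uncurry ρ) (x, y) ∂μ := by
    intro x
    have hs : MeasurableSet (Prod.mk x ⁻¹' {q : X × X | P q.1 q.2}) :=
      measurable_prodMk_left hP
    rw [show {y | P x y} = Prod.mk x ⁻¹' {q : X × X | P q.1 q.2} from rfl,
      ← lintegral_indicator hs]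
    refine lintegral_congr fun y => ?_
    by_cases hy : P x y <;> simp [Set.indicator_apply, hy, Function.uncurry]
  simp_rw [h1]
  exact (hρ.indicator hP).lintegral_prod_right'

set_option maxHeartbeats 1000000 in
/-- Estimate (2.5) in the proof of the generalized Maz'ya–Shaposhnikova formula:
`lim_{R→∞} liminf_{n→∞} II_b(R,n) = lim_{R→∞} limsup_{n→∞} II_b(R,n) = L ‖u‖_p^p`. -/
theorem IIb_limit
    {X : Type*} [MetricSpace X] [CompleteSpace X] [TopologicalSpace.SeparableSpace X]
    [MeasurableSpace X] [BorelSpace X]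
    (μ : Measure X) [IsLocallyFiniteMeasure μ] [μ.IsOpenPosMeasure]
    (p : ℝ) (hp : 1 ≤ p)
    (ρ : ℕ → X → X → ℝ≥0∞)
    (hmeas : ∀ n, Measurable (Function.uncurry (ρ n)))
    (hsymm : ∀ n x y, ρ n x y = ρ n y x)
    (L : ℝ) (hL : 0 ≤ L)
    -- Assumption 1 (A)
    (hA : ∀ x : X,
      Tendsto (fun R : ℝ =>
          limsup (fun n => ∫⁻ y in {y | R ≤ dist x y}, ρ n x y ∂μ) atTop)
        atTop (nhds (ENNReal.ofReal L)) ∧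
      Tendsto (fun R : ℝ =>
          liminf (fun n => ∫⁻ y in {y | R ≤ dist x y}, ρ n x y ∂μ) atTop)
        atTop (nhds (ENNReal.ofReal L)))
    -- Assumption 1 (C)
    (hC : ∀ᶠ R : ℝ in atTop, ∃ C : ℝ≥0∞, C < ⊤ ∧
      ∀ (x : X) (n : ℕ), ∫⁻ y in {y | R ≤ dist x y}, ρ n x y ∂μ ≤ C)
    (x₀ : X) (u : X → ℝ) (hu : MemLp u (ENNReal.ofReal p) μ) :
    Tendsto (fun R : ℝ =>
        liminf (fun n =>
          ∫⁻ x, ENNReal.ofReal (|u x| ^ p) *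
            (∫⁻ y in {y | R ≤ dist x y ∧ 2 * dist x x₀ < dist y x₀}, ρ n x y ∂μ) ∂μ) atTop)
      atTop (nhds (ENNReal.ofReal L * ∫⁻ x, ENNReal.ofReal (|u x| ^ p) ∂μ)) ∧
    Tendsto (fun R : ℝ =>
        limsup (fun n =>
          ∫⁻ x, ENNReal.ofReal (|u x| ^ p) *
            (∫⁻ y in {y | R ≤ dist x y ∧ 2 * dist x x₀ < dist y x₀}, ρ n x y ∂μ) ∂μ) atTop)
      atTop (nhds (ENNReal.ofReal L * ∫⁻ x, ENNReal.ofReal (|u x| ^ p) ∂μ)) := by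
  haveI : SecondCountableTopology X := UniformSpace.secondCountable_of_separable X
  -- a constant bound from assumption (C)
  obtain ⟨R₀, C, hCfin, hCb⟩ : ∃ R₀ : ℝ, ∃ C : ℝ≥0∞, C < ⊤ ∧
      ∀ (x : X) (n : ℕ), ∫⁻ y in {y | R₀ ≤ dist x y}, ρ n x y ∂μ ≤ C := hC.exists
  -- a measurable representative of the weight
  set v : X → ℝ := hu.aestronglyMeasurable.mk u with hvdef
  have huv : u =ᵐ[μ] v := hu.aestronglyMeasurable.ae_eq_mk
  set w : X → ℝ≥0∞ := fun x => ENNReal.ofReal (|v x| ^ p) with hwdef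
  have hwmeas : Measurable w := by
    have hv : Measurable v := hu.aestronglyMeasurable.stronglyMeasurable_mk.measurable
    exact (hv.abs.pow_const p).ennreal_ofReal
  have hwne : ∀ x, w x ≠ ∞ := fun x => ENNReal.ofReal_ne_top
  have hweq : (fun x => ENNReal.ofReal (|u x| ^ p)) =ᵐ[μ] w := by
    filter_upwards [huv] with x hx
    rw [hwdef]; simp only [hx]
  -- rewrite the goal in terms of `w`
  have hGcongr : ∀ (R : ℝ) (n : ℕ),
      (∫⁻ x, ENNReal.ofReal (|u x| ^ p) *
          (∫⁻ y in {y | R ≤ dist x y ∧ 2 * dist x x₀ < dist y x₀}, ρ n x y ∂μ) ∂μ)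
      = ∫⁻ x, w x *
          (∫⁻ y in {y | R ≤ dist x y ∧ 2 * dist x x₀ < dist y x₀}, ρ n x y ∂μ) ∂μ := by
    intro R n
    refine lintegral_congr_ae ?_
    filter_upwards [hweq] with x hx
    rw [hx]
  have hTcongr : (∫⁻ x, ENNReal.ofReal (|u x| ^ p) ∂μ) = ∫⁻ x, w x ∂μ :=
    lintegral_congr_ae hweq
  simp only [hGcongr, hTcongr]
  -- finiteness of the total weight
  have hT' : (∫⁻ x, w x ∂μ) ≠ ∞ := by
    rw [← hTcongr]
    have hpne : (ENNReal.ofReal p) ≠ 0 := by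
      simp only [ne_eq, ENNReal.ofReal_eq_zero, not_le]; linarith
    have h1 : Integrable (fun x => ‖u x‖ ^ p) μ := by
      have := hu.integrable_norm_rpow hpne ENNReal.ofReal_ne_top
      simpa [ENNReal.toReal_ofReal (by linarith : (0:ℝ) ≤ p)] using this
    have h2 := h1.hasFiniteIntegral
    rw [HasFiniteIntegral] at h2
    refine ne_of_lt (lt_of_le_of_lt (le_of_eq ?_) h2)
    refine lintegral_congr fun x => ?_
    rw [Real.norm_eq_abs, ← Real.enorm_eq_ofReal (Real.rpow_nonneg (abs_nonneg _) p)]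
  -- measurability of the inner integrals
  have hHmeas : ∀ (R : ℝ) (n : ℕ),
      Measurable (fun x => ∫⁻ y in {y | R ≤ dist x y}, ρ n x y ∂μ) := by
    intro R n
    exact IIb_meas_param (hmeas n)
      (measurableSet_le measurable_const measurable_dist)
  have hGmeas : ∀ (R : ℝ) (n : ℕ),
      Measurable (fun x =>
        ∫⁻ y in {y | R ≤ dist x y ∧ 2 * dist x x₀ < dist y x₀}, ρ n x y ∂μ) := by
    intro R n
    have h1 : MeasurableSet {q : X × X | R ≤ dist q.1 q.2} :=
      measurableSet_le measurable_const measurable_dist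
    have h2 : MeasurableSet {q : X × X | 2 * dist q.1 x₀ < dist q.2 x₀} :=
      measurableSet_lt ((measurable_fst.dist measurable_const).const_mul 2)
        (measurable_snd.dist measurable_const)
    have hT : MeasurableSet {q : X × X | R ≤ dist q.1 q.2 ∧ 2 * dist q.1 x₀ < dist q.2 x₀} := by
      rw [Set.setOf_and]; exact h1.inter h2
    exact IIb_meas_param (hmeas n) hT
  -- monotonicity facts
  have hHanti : ∀ (n : ℕ) (x : X),
      Antitone (fun R : ℝ => ∫⁻ y in {y | R ≤ dist x y}, ρ n x y ∂μ) := by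
    intro n x R R' hRR'
    exact lintegral_mono_set (fun y hy => by
      simp only [Set.mem_setOf_eq] at hy ⊢; linarith)
  have hGleH : ∀ (R : ℝ) (n : ℕ) (x : X),
      (∫⁻ y in {y | R ≤ dist x y ∧ 2 * dist x x₀ < dist y x₀}, ρ n x y ∂μ)
        ≤ ∫⁻ y in {y | R ≤ dist x y}, ρ n x y ∂μ :=
    fun R n x => lintegral_mono_set (fun y hy => hy.1)
  have hGeqH : ∀ (R : ℝ) (n : ℕ) (x : X), 3 * dist x x₀ < R →
      (∫⁻ y in {y | R ≤ dist x y ∧ 2 * dist x x₀ < dist y x₀}, ρ n x y ∂μ)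
        = ∫⁻ y in {y | R ≤ dist x y}, ρ n x y ∂μ := by
    intro R n x hR
    have hset : {y | R ≤ dist x y ∧ 2 * dist x x₀ < dist y x₀} = {y : X | R ≤ dist x y} := by
      ext y
      simp only [Set.mem_setOf_eq, and_iff_left_iff_imp]
      intro hy
      have h1 : dist x y ≤ dist x x₀ + dist x₀ y := dist_triangle x x₀ y
      have h2 : dist x₀ y = dist y x₀ := dist_comm x₀ y
      linarith
    rw [hset]
  -- the uniform bound
  have hHC : ∀ R : ℝ, R₀ ≤ R → ∀ (n : ℕ) (x : X),
      (∫⁻ y in {y | R ≤ dist x y}, ρ n x y ∂μ) ≤ C :=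
    fun R hR n x => le_trans (hHanti n x hR) (hCb x n)
  -- limsup/liminf in n are ≥ L, and antitone in R
  have hSanti : ∀ x : X, Antitone (fun R : ℝ =>
      limsup (fun n => ∫⁻ y in {y | R ≤ dist x y}, ρ n x y ∂μ) atTop) := by
    intro x R R' h
    exact limsup_le_limsup (Eventually.of_forall fun n => hHanti n x h)
  have hIanti : ∀ x : X, Antitone (fun R : ℝ =>
      liminf (fun n => ∫⁻ y in {y | R ≤ dist x y}, ρ n x y ∂μ) atTop) := by
    intro x R R' h
    exact liminf_le_liminf (Eventually.of_forall fun n => hHanti n x h)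
  have hSgeL : ∀ (R : ℝ) (x : X), ENNReal.ofReal L ≤
      limsup (fun n => ∫⁻ y in {y | R ≤ dist x y}, ρ n x y ∂μ) atTop :=
    fun R x => (hSanti x).le_of_tendsto (hA x).1 R
  have hIgeL : ∀ (R : ℝ) (x : X), ENNReal.ofReal L ≤
      liminf (fun n => ∫⁻ y in {y | R ≤ dist x y}, ρ n x y ∂μ) atTop :=
    fun R x => (hIanti x).le_of_tendsto (hA x).2 R
  have hSmeas : ∀ R : ℝ, Measurable (fun x =>
      limsup (fun n => ∫⁻ y in {y | R ≤ dist x y}, ρ n x y ∂μ) atTop) :=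
    fun R => Measurable.limsup (hHmeas R)
  -- the lower bound
  have hlow : ∀ R : ℝ, (ENNReal.ofReal L) * ∫⁻ x in {x | 3 * dist x x₀ < R}, w x ∂μ
      ≤ liminf (fun n => ∫⁻ x, w x *
          (∫⁻ y in {y | R ≤ dist x y ∧ 2 * dist x x₀ < dist y x₀}, ρ n x y ∂μ) ∂μ) atTop := by
    intro R
    have hsR : MeasurableSet {x : X | 3 * dist x x₀ < R} :=
      measurableSet_lt ((measurable_id.dist measurable_const).const_mul 3) measurable_const
    calc ENNReal.ofReal L * ∫⁻ x in {x : X | 3 * dist x x₀ < R}, w x ∂μ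
        = ∫⁻ x in {x : X | 3 * dist x x₀ < R}, ENNReal.ofReal L * w x ∂μ :=
          (lintegral_const_mul _ hwmeas).symm
      _ = ∫⁻ x, Set.indicator {x : X | 3 * dist x x₀ < R}
            (fun x => ENNReal.ofReal L * w x) x ∂μ := (lintegral_indicator hsR _).symm
      _ ≤ ∫⁻ x, liminf (fun n => w x *
            (∫⁻ y in {y | R ≤ dist x y ∧ 2 * dist x x₀ < dist y x₀}, ρ n x y ∂μ)) atTop ∂μ := by
          refine lintegral_mono fun x => ?_
          by_cases hx : x ∈ {x : X | 3 * dist x x₀ < R}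
          · rw [Set.indicator_of_mem hx]
            have heq : (fun n => w x *
                (∫⁻ y in {y | R ≤ dist x y ∧ 2 * dist x x₀ < dist y x₀}, ρ n x y ∂μ))
                = fun n => w x * ∫⁻ y in {y | R ≤ dist x y}, ρ n x y ∂μ := by
              funext n; rw [hGeqH R n x hx]
            rw [heq]
            calc ENNReal.ofReal L * w x = w x * ENNReal.ofReal L := mul_comm _ _
              _ ≤ w x * liminf (fun n => ∫⁻ y in {y | R ≤ dist x y}, ρ n x y ∂μ) atTop :=
                  mul_le_mul_right (hIgeL R x) _
              _ ≤ liminf (fun n => w x * ∫⁻ y in {y | R ≤ dist x y}, ρ n x y ∂μ) atTop :=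
                  IIb_liminf_const_mul_le _ _
          · rw [Set.indicator_of_notMem hx]
            exact zero_le
      _ ≤ liminf (fun n => ∫⁻ x, w x *
            (∫⁻ y in {y | R ≤ dist x y ∧ 2 * dist x x₀ < dist y x₀}, ρ n x y ∂μ) ∂μ) atTop :=
          lintegral_liminf_le (fun n => hwmeas.mul (hGmeas R n))
  -- the upper bound
  have hup : ∀ R : ℝ, R₀ ≤ R →
      limsup (fun n => ∫⁻ x, w x *
          (∫⁻ y in {y | R ≤ dist x y ∧ 2 * dist x x₀ < dist y x₀}, ρ n x y ∂μ) ∂μ) atTop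
      ≤ ∫⁻ x, w x * limsup (fun n => ∫⁻ y in {y | R ≤ dist x y}, ρ n x y ∂μ) atTop ∂μ := by
    intro R hR
    have h1 : limsup (fun n => ∫⁻ x, w x *
        (∫⁻ y in {y | R ≤ dist x y ∧ 2 * dist x x₀ < dist y x₀}, ρ n x y ∂μ) ∂μ) atTop
        ≤ ∫⁻ x, limsup (fun n => w x *
            (∫⁻ y in {y | R ≤ dist x y ∧ 2 * dist x x₀ < dist y x₀}, ρ n x y ∂μ)) atTop ∂μ := by
      refine limsup_lintegral_le (fun x => w x * C)
        (fun n => hwmeas.mul (hGmeas R n))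
        (fun n => Eventually.of_forall fun x =>
          mul_le_mul_right (le_trans (hGleH R n x) (hHC R hR n x)) _) ?_
      rw [lintegral_mul_const _ hwmeas]
      exact ENNReal.mul_ne_top hT' hCfin.ne
    refine h1.trans (lintegral_mono fun x => ?_)
    calc limsup (fun n => w x *
          (∫⁻ y in {y | R ≤ dist x y ∧ 2 * dist x x₀ < dist y x₀}, ρ n x y ∂μ)) atTop
        ≤ limsup (fun n => w x * ∫⁻ y in {y | R ≤ dist x y}, ρ n x y ∂μ) atTop :=
          limsup_le_limsup (Eventually.of_forall fun n => mul_le_mul_right (hGleH R n x) _)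
      _ = w x * limsup (fun n => ∫⁻ y in {y | R ≤ dist x y}, ρ n x y ∂μ) atTop :=
          ENNReal.limsup_const_mul_of_ne_top (hwne x)
  -- a sequence tending to infinity
  have hseqR : Tendsto (fun k : ℕ => R₀ + (k : ℝ)) atTop atTop :=
    tendsto_atTop_add_const_left atTop R₀ tendsto_natCast_atTop_atTop
  -- limit of the upper bound
  have hupper_tendsto : Tendsto (fun R : ℝ => ∫⁻ x, w x *
      limsup (fun n => ∫⁻ y in {y | R ≤ dist x y}, ρ n x y ∂μ) atTop ∂μ)
      atTop (nhds (ENNReal.ofReal L * ∫⁻ x, w x ∂μ)) := by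
    set F : ℝ → ℝ≥0∞ := fun R => ∫⁻ x, w x *
      limsup (fun n => ∫⁻ y in {y | R ≤ dist x y}, ρ n x y ∂μ) atTop ∂μ with hFdef
    have hFanti : Antitone F := fun R R' h =>
      lintegral_mono fun x => mul_le_mul_right (hSanti x h) _
    have hFmono := tendsto_atTop_iInf hFanti
    have hFseq : Tendsto (F ∘ fun k : ℕ => R₀ + (k : ℝ)) atTop
        (nhds (ENNReal.ofReal L * ∫⁻ x, w x ∂μ)) := by
      have hdct := tendsto_lintegral_of_dominated_convergence (μ := μ)
        (F := fun (k : ℕ) x => w x *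
          limsup (fun n => ∫⁻ y in {y | R₀ + (k : ℝ) ≤ dist x y}, ρ n x y ∂μ) atTop)
        (f := fun x => w x * ENNReal.ofReal L) (bound := fun x => w x * C)
        (fun k => hwmeas.mul (hSmeas _))
        (fun k => Eventually.of_forall fun x => by
          refine mul_le_mul_right ?_ _
          refine limsup_le_of_le ?_ (Eventually.of_forall fun n =>
            hHC _ (le_add_of_nonneg_right (Nat.cast_nonneg k)) n x)
          isBoundedDefault)
        (by rw [lintegral_mul_const _ hwmeas]; exact ENNReal.mul_ne_top hT' hCfin.ne)
        (Eventually.of_forall fun x =>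
          ENNReal.Tendsto.const_mul ((hA x).1.comp hseqR) (Or.inr (hwne x)))
      have heval : (∫⁻ x, w x * ENNReal.ofReal L ∂μ) = ENNReal.ofReal L * ∫⁻ x, w x ∂μ := by
        rw [lintegral_mul_const _ hwmeas, mul_comm]
      rw [heval] at hdct
      exact hdct
    have huniq : (⨅ R : ℝ, F R) = ENNReal.ofReal L * ∫⁻ x, w x ∂μ :=
      tendsto_nhds_unique (hFmono.comp hseqR) hFseq
    rw [← huniq]
    exact hFmono
  -- limit of the lower bound
  have hlower_tendsto : Tendsto (fun R : ℝ =>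
      ENNReal.ofReal L * ∫⁻ x in {x : X | 3 * dist x x₀ < R}, w x ∂μ)
      atTop (nhds (ENNReal.ofReal L * ∫⁻ x, w x ∂μ)) := by
    have hsR : ∀ R : ℝ, MeasurableSet {x : X | 3 * dist x x₀ < R} := fun R =>
      measurableSet_lt ((measurable_id.dist measurable_const).const_mul 3) measurable_const
    set B : ℝ → ℝ≥0∞ := fun R => ∫⁻ x in {x : X | 3 * dist x x₀ < R}, w x ∂μ with hBdef
    have hBmono : Monotone B := fun R R' h =>
      lintegral_mono_set (fun x hx => by
        simp only [Set.mem_setOf_eq] at hx ⊢; linarith)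
    have hBlim := tendsto_atTop_iSup hBmono
    have hBseq : Tendsto (B ∘ fun k : ℕ => R₀ + (k : ℝ)) atTop (nhds (∫⁻ x, w x ∂μ)) := by
      have hmct := lintegral_tendsto_of_tendsto_of_monotone (μ := μ)
        (f := fun (k : ℕ) x => Set.indicator {x : X | 3 * dist x x₀ < R₀ + (k : ℝ)} w x)
        (F := w)
        (fun k => (hwmeas.indicator (hsR _)).aemeasurable)
        (Eventually.of_forall fun x k k' hkk' => by
          refine Set.indicator_le_indicator_of_subset (fun z hz => ?_) (fun z => zero_le) x
          simp only [Set.mem_setOf_eq] at hz ⊢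
          have hcast : (k : ℝ) ≤ (k' : ℝ) := Nat.cast_le.mpr hkk'
          linarith)
        (Eventually.of_forall fun x => by
          refine tendsto_atTop_of_eventually_const (i₀ := ⌈3 * dist x x₀ - R₀⌉₊ + 1) fun k hk => ?_
          refine Set.indicator_of_mem ?_ w
          have h1 : 3 * dist x x₀ - R₀ ≤ (⌈3 * dist x x₀ - R₀⌉₊ : ℝ) := Nat.le_ceil _
          have h2 : ((⌈3 * dist x x₀ - R₀⌉₊ + 1 : ℕ) : ℝ) ≤ (k : ℝ) := by exact_mod_cast hk
          have h3 : ((⌈3 * dist x x₀ - R₀⌉₊ : ℕ) : ℝ) + 1 ≤ (k : ℝ) := by push_cast at h2 ⊢; linarith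
          show 3 * dist x x₀ < R₀ + (k : ℝ)
          linarith)
      have heq : (fun k : ℕ => ∫⁻ x, Set.indicator {x : X | 3 * dist x x₀ < R₀ + (k : ℝ)} w x ∂μ)
          = B ∘ fun k : ℕ => R₀ + (k : ℝ) := by
        funext k
        simp only [Function.comp_apply, hBdef]
        rw [lintegral_indicator (hsR _)]
      rw [heq] at hmct
      exact hmct
    have huniq : (⨆ R : ℝ, B R) = ∫⁻ x, w x ∂μ :=
      tendsto_nhds_unique (hBlim.comp hseqR) hBseq
    have : Tendsto B atTop (nhds (∫⁻ x, w x ∂μ)) := huniq ▸ hBlim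
    exact ENNReal.Tendsto.const_mul this (Or.inr ENNReal.ofReal_ne_top)
  -- conclusion by squeezing
  constructor
  · refine tendsto_of_tendsto_of_tendsto_of_le_of_le' hlower_tendsto hupper_tendsto
      (Eventually.of_forall fun R => hlow R) ?_
    filter_upwards [eventually_ge_atTop R₀] with R hR
    exact le_trans liminf_le_limsup (hup R hR)
  · refine tendsto_of_tendsto_of_tendsto_of_le_of_le' hlower_tendsto hupper_tendsto
      ?_ ?_
    · exact Eventually.of_forall fun R => le_trans (hlow R) liminf_le_limsup
    · filter_upwards [eventually_ge_atTop R₀] with R hR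
      exact hup R hR
end

section
/- Let (X,d,m) be a metric measure space, p ≥ 1, and let (ρ_n)_{n∈ℕ} be nonnegative symmetric Borel mollifiers on {(x,y) : x ≠ y} satisfying parts (A) (with constant L) and (C) of Assumption 1. Fix x₀ ∈ X and u ∈ L^p(X,m), and for R > 0, n ∈ ℕ set III(R,n) := ∬_{{(x,y) : d(x,y) ≥ R and (1/2) d(x,x₀) ≤ d(y,x₀) ≤ 2 d(x,x₀)}} |u(x)−u(y)|^p ρ_n(x,y) dm(x) dm(y). Then lim_{R→∞} limsup_{n→∞} III(R,n) = 0. -/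
open MeasureTheory Filter Topology Metric Set ENNReal

/-- Elementary inequality: `|a-b|^p ≤ 2^p (|a|^p + |b|^p)` for `p ≥ 0`. -/
lemma abs_sub_rpow_le (p : ℝ) (hp : 0 ≤ p) (a b : ℝ) :
    |a - b| ^ p ≤ 2 ^ p * (|a| ^ p + |b| ^ p) := by
  have h1 : |a - b| ≤ 2 * max |a| |b| := by
    have : |a - b| ≤ |a| + |b| := abs_sub a b
    rcases le_total |a| |b| with h | h
    · rw [max_eq_right h]; linarith
    · rw [max_eq_left h]; linarith
  have h2 : |a - b| ^ p ≤ (2 * max |a| |b|) ^ p :=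
    Real.rpow_le_rpow (abs_nonneg _) h1 hp
  rw [Real.mul_rpow (by norm_num) (le_trans (abs_nonneg a) (le_max_left _ _))] at h2
  refine h2.trans (mul_le_mul_of_nonneg_left ?_ (Real.rpow_nonneg (by norm_num) p))
  rcases le_total |a| |b| with h | h
  · rw [max_eq_right h]
    exact le_add_of_nonneg_left (Real.rpow_nonneg (abs_nonneg _) _)
  · rw [max_eq_left h]
    exact le_add_of_nonneg_right (Real.rpow_nonneg (abs_nonneg _) _)

lemma ofReal_abs_sub_rpow_le (p : ℝ) (hp : 0 ≤ p) (a b : ℝ) :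
    ENNReal.ofReal (|a - b| ^ p) ≤
      ENNReal.ofReal (2 ^ p) * (ENNReal.ofReal (|a| ^ p) + ENNReal.ofReal (|b| ^ p)) := by
  calc ENNReal.ofReal (|a - b| ^ p)
      ≤ ENNReal.ofReal (2 ^ p * (|a| ^ p + |b| ^ p)) :=
        ENNReal.ofReal_le_ofReal (abs_sub_rpow_le p hp a b)
    _ = ENNReal.ofReal (2 ^ p) * (ENNReal.ofReal (|a| ^ p) + ENNReal.ofReal (|b| ^ p)) := by
        rw [ENNReal.ofReal_mul (Real.rpow_nonneg (by norm_num) p),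
          ENNReal.ofReal_add (Real.rpow_nonneg (abs_nonneg _) _)
            (Real.rpow_nonneg (abs_nonneg _) _)]

/-- The tail of a finite `lintegral` tends to zero. -/
lemma tail_lintegral_tendsto {X : Type*} [MetricSpace X] [MeasurableSpace X] [BorelSpace X]
    (μ : Measure X) (g : X → ℝ≥0∞) (hg : Measurable g)
    (hfin : ∫⁻ x, g x ∂μ ≠ ⊤) (x₀ : X) :
    Tendsto (fun r : ℝ => ∫⁻ x in {x | r ≤ dist x x₀}, g x ∂μ) atTop (𝓝 0) := by
  have hms : ∀ r : ℝ, MeasurableSet {x : X | r ≤ dist x x₀} := fun r =>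
    (isClosed_le continuous_const (continuous_id.dist continuous_const)).measurableSet
  set ν := μ.withDensity g with hν
  have heq : ∀ r : ℝ, ∫⁻ x in {x | r ≤ dist x x₀}, g x ∂μ = ν {x | r ≤ dist x x₀} := fun r =>
    (withDensity_apply g (hms r)).symm
  have hanti : Antitone fun r : ℝ => {x : X | r ≤ dist x x₀} :=
    fun r s hrs x hx => le_trans hrs hx
  have hi : (⋂ r : ℝ, {x : X | r ≤ dist x x₀}) = (∅ : Set X) := by
    ext x
    simp only [mem_iInter, mem_setOf_eq, mem_empty_iff_false, iff_false, not_forall]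
    exact ⟨dist x x₀ + 1, by linarith⟩
  have hfin' : ∃ r : ℝ, ν {x : X | r ≤ dist x x₀} ≠ ⊤ := by
    refine ⟨0, ?_⟩
    have : ν {x : X | (0:ℝ) ≤ dist x x₀} ≤ ν univ := measure_mono (subset_univ _)
    rw [hν, withDensity_apply g MeasurableSet.univ, Measure.restrict_univ] at this
    exact ne_top_of_le_ne_top hfin this
  have h := tendsto_measure_iInter_atTop (μ := ν)
    (fun r => (hms r).nullMeasurableSet) hanti hfin'
  rw [hi] at h
  simp only [measure_empty] at h
  simpa only [Function.comp_def, heq] using h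

/-- Main estimate, with a measurable representative. -/
lemma III_aux {X : Type*} [MetricSpace X] [MeasurableSpace X] [BorelSpace X]
    [SecondCountableTopology X]
    (μ : Measure X) [SigmaFinite μ]
    (p : ℝ) (hp : 1 ≤ p)
    (ρ : ℕ → X → X → ℝ≥0∞)
    (hmeas : ∀ n, Measurable (Function.uncurry (ρ n)))
    (hsymm : ∀ n x y, ρ n x y = ρ n y x)
    (hC : ∀ᶠ R : ℝ in atTop, ∃ C : ℝ≥0∞, C < ⊤ ∧
      ∀ (x : X) (n : ℕ), ∫⁻ y in {y | R ≤ dist x y}, ρ n x y ∂μ ≤ C)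
    (x₀ : X) (u : X → ℝ) (hum : Measurable u)
    (hfin : ∫⁻ x, ENNReal.ofReal (|u x| ^ p) ∂μ ≠ ⊤) :
    Tendsto (fun R : ℝ =>
        limsup (fun n =>
          ∫⁻ x, ∫⁻ y in
              {y | R ≤ dist x y ∧ dist x x₀ / 2 ≤ dist y x₀ ∧ dist y x₀ ≤ 2 * dist x x₀},
            ENNReal.ofReal (|u x - u y| ^ p) * ρ n x y ∂μ ∂μ) atTop)
      atTop (nhds 0) := by
  have hp0 : (0:ℝ) ≤ p := le_trans zero_le_one hp
  set g : X → ℝ≥0∞ := fun x => ENNReal.ofReal (|u x| ^ p) with hgdef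
  have hg : Measurable g := by
    have h1 : Continuous fun t : ℝ => t ^ p := Real.continuous_rpow_const hp0
    exact ENNReal.measurable_ofReal.comp ((h1.measurable).comp hum.abs)
  obtain ⟨R₀', hR₀'⟩ := eventually_atTop.mp hC
  set R₀ : ℝ := max R₀' 0 with hR₀def
  obtain ⟨C, hClt, hCb⟩ := hR₀' R₀ (le_max_left _ _)
  set c : ℝ≥0∞ := ENNReal.ofReal (2 ^ p) with hcdef
  set K : ℝ≥0∞ := c * (2 * C) with hKdef
  have hKne : K ≠ ⊤ :=
    ENNReal.mul_ne_top ENNReal.ofReal_ne_top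
      (ENNReal.mul_ne_top (by norm_num) hClt.ne)
  have htail : Tendsto (fun r : ℝ => ∫⁻ x in {x | r ≤ dist x x₀}, g x ∂μ) atTop (𝓝 0) :=
    tail_lintegral_tendsto μ g hg hfin x₀
  have hM : Tendsto (fun R : ℝ => K * ∫⁻ x in {x | R / 3 ≤ dist x x₀}, g x ∂μ)
      atTop (𝓝 0) := by
    have h3 : Tendsto (fun R : ℝ => R / 3) atTop atTop :=
      tendsto_id.atTop_div_const (by norm_num)
    have h4 := (htail.comp h3)
    have h5 := ENNReal.Tendsto.const_mul h4 (Or.inr hKne)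
    simpa using h5
  refine tendsto_of_tendsto_of_tendsto_of_le_of_le' tendsto_const_nhds hM
    (Eventually.of_forall fun R => zero_le) ?_
  filter_upwards [eventually_ge_atTop R₀] with R hR
  refine limsup_le_of_le (by isBoundedDefault) (Eventually.of_forall fun n => ?_)
  -- the main estimate for fixed R ≥ R₀ and n
  set T : Set (X × X) := {z | R ≤ dist z.1 z.2 ∧ dist z.1 x₀ / 2 ≤ dist z.2 x₀ ∧
    dist z.2 x₀ ≤ 2 * dist z.1 x₀} with hTdef
  have hT : MeasurableSet T :=
    (measurableSet_le measurable_const measurable_dist).inter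
      ((measurableSet_le ((measurable_fst.dist measurable_const).div_const 2)
          (measurable_snd.dist measurable_const)).inter
        (measurableSet_le (measurable_snd.dist measurable_const)
          ((measurable_fst.dist measurable_const).const_mul 2)))
  set S : X → Set X := fun x => {y | (x, y) ∈ T} with hSdef
  have hSx : ∀ x, MeasurableSet (S x) := fun x => hT.preimage measurable_prodMk_left
  set S' : X → Set X := fun y => {x | (x, y) ∈ T} with hS'def
  set F₁ : X × X → ℝ≥0∞ := fun z => T.indicator (fun w => g w.1 * Function.uncurry (ρ n) w) z
    with hF₁def
  set F₂ : X × X → ℝ≥0∞ := fun z => T.indicator (fun w => g w.2 * Function.uncurry (ρ n) w) z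
    with hF₂def
  have hF₁ : Measurable F₁ := ((hg.comp measurable_fst).mul (hmeas n)).indicator hT
  have hF₂ : Measurable F₂ := ((hg.comp measurable_snd).mul (hmeas n)).indicator hT
  have hρx : ∀ x, Measurable fun y => ρ n x y := fun x =>
    (hmeas n).comp measurable_prodMk_left
  have hρy : ∀ y, Measurable fun x => ρ n x y := fun y =>
    (hmeas n).comp measurable_prodMk_right
  -- pointwise bound for the inner integral
  have key : ∀ x : X,
      (∫⁻ y in {y | R ≤ dist x y ∧ dist x x₀ / 2 ≤ dist y x₀ ∧ dist y x₀ ≤ 2 * dist x x₀},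
        ENNReal.ofReal (|u x - u y| ^ p) * ρ n x y ∂μ)
      ≤ ∫⁻ y, c * (F₁ (x, y) + F₂ (x, y)) ∂μ := by
    intro x
    have hSeq : {y | R ≤ dist x y ∧ dist x x₀ / 2 ≤ dist y x₀ ∧ dist y x₀ ≤ 2 * dist x x₀}
        = S x := rfl
    rw [hSeq, ← lintegral_indicator (hSx x)]
    refine lintegral_mono fun y => ?_
    by_cases hy : y ∈ S x
    · rw [indicator_of_mem hy]
      have hmem : (x, y) ∈ T := hy
      simp only [hF₁def, hF₂def, indicator_of_mem hmem]
      have base := ofReal_abs_sub_rpow_le p hp0 (u x) (u y)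
      calc ENNReal.ofReal (|u x - u y| ^ p) * ρ n x y
          ≤ (c * (g x + g y)) * ρ n x y := mul_le_mul_left base _
        _ = c * (g x * Function.uncurry (ρ n) (x, y) +
              g y * Function.uncurry (ρ n) (x, y)) := by
            simp only [Function.uncurry_apply_pair]; ring
    · rw [indicator_of_notMem hy]
      exact zero_le
  have hAmeas : Measurable fun x => ∫⁻ y, F₁ (x, y) ∂μ := by
    have : Measurable (Function.uncurry fun x y => F₁ (x, y)) :=
      hF₁.comp (measurable_fst.prodMk measurable_snd)
    exact this.lintegral_prod_right
  have hBmeas : Measurable fun x => ∫⁻ y, F₂ (x, y) ∂μ := by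
    have : Measurable (Function.uncurry fun x y => F₂ (x, y)) :=
      hF₂.comp (measurable_fst.prodMk measurable_snd)
    exact this.lintegral_prod_right
  have hsec₁ : ∀ x, Measurable fun y => F₁ (x, y) := fun x =>
    hF₁.comp measurable_prodMk_left
  have hsec₂ : ∀ x, Measurable fun y => F₂ (x, y) := fun x =>
    hF₂.comp measurable_prodMk_left
  -- tail set
  set E : Set X := {x | R / 3 ≤ dist x x₀} with hEdef
  have hE : MeasurableSet E :=
    (isClosed_le continuous_const (continuous_id.dist continuous_const)).measurableSet
  -- bound for the first term
  have hA : (∫⁻ x, ∫⁻ y, F₁ (x, y) ∂μ ∂μ) ≤ (∫⁻ x in E, g x ∂μ) * C := by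
    have hpt : ∀ x, (∫⁻ y, F₁ (x, y) ∂μ) ≤ E.indicator (fun x => g x * C) x := by
      intro x
      have h1 : (fun y => F₁ (x, y)) = (S x).indicator fun y => g x * ρ n x y := by
        funext y
        by_cases hy : y ∈ S x
        · simp only [hF₁def, indicator_of_mem hy, indicator_of_mem (show (x,y) ∈ T from hy),
            Function.uncurry_apply_pair]
        · simp only [hF₁def, indicator_of_notMem hy,
            indicator_of_notMem (show (x,y) ∉ T from hy)]
      rw [h1, lintegral_indicator (hSx x), lintegral_const_mul _ (hρx x)]
      by_cases hx : x ∈ E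
      · rw [indicator_of_mem hx]
        refine mul_le_mul_right ?_ _
        calc (∫⁻ y in S x, ρ n x y ∂μ)
            ≤ ∫⁻ y in {y | R₀ ≤ dist x y}, ρ n x y ∂μ := by
              refine lintegral_mono_set fun y hy => ?_
              exact le_trans hR hy.1
          _ ≤ C := hCb x n
      · rw [indicator_of_notMem hx]
        have hSempty : S x = ∅ := by
          rw [eq_empty_iff_forall_notMem]
          intro y hy
          obtain ⟨h1', h2', h3'⟩ := hy
          have hd : dist x y ≤ 3 * dist x x₀ := by
            have := dist_triangle x x₀ y
            have := dist_comm x₀ y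
            calc dist x y ≤ dist x x₀ + dist y x₀ := by
                  rw [dist_comm y x₀]; exact dist_triangle x x₀ y
              _ ≤ dist x x₀ + 2 * dist x x₀ := by linarith
              _ = 3 * dist x x₀ := by ring
          have hxE : ¬ (R / 3 ≤ dist x x₀) := hx
          push_neg at hxE
          linarith
        rw [hSempty]
        simp
    calc (∫⁻ x, ∫⁻ y, F₁ (x, y) ∂μ ∂μ)
        ≤ ∫⁻ x, E.indicator (fun x => g x * C) x ∂μ := lintegral_mono hpt
      _ = ∫⁻ x in E, g x * C ∂μ := lintegral_indicator hE _
      _ = (∫⁻ x in E, g x ∂μ) * C := lintegral_mul_const _ hg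
  -- bound for the second term (after Fubini)
  have hB : (∫⁻ x, ∫⁻ y, F₂ (x, y) ∂μ ∂μ) ≤ (∫⁻ x in E, g x ∂μ) * C := by
    have hswap : (∫⁻ x, ∫⁻ y, F₂ (x, y) ∂μ ∂μ) = ∫⁻ y, ∫⁻ x, F₂ (x, y) ∂μ ∂μ :=
      lintegral_lintegral_swap
        ((hF₂.comp (measurable_fst.prodMk measurable_snd)).aemeasurable)
    rw [hswap]
    have hpt : ∀ y, (∫⁻ x, F₂ (x, y) ∂μ) ≤ E.indicator (fun y => g y * C) y := by
      intro y
      have hS'y : MeasurableSet (S' y) := hT.preimage measurable_prodMk_right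
      have h1 : (fun x => F₂ (x, y)) = (S' y).indicator fun x => g y * ρ n x y := by
        funext x
        by_cases hx : x ∈ S' y
        · simp only [hF₂def, indicator_of_mem hx, indicator_of_mem (show (x,y) ∈ T from hx),
            Function.uncurry_apply_pair]
        · simp only [hF₂def, indicator_of_notMem hx,
            indicator_of_notMem (show (x,y) ∉ T from hx)]
      rw [h1, lintegral_indicator hS'y, lintegral_const_mul _ (hρy y)]
      by_cases hyE : y ∈ E
      · rw [indicator_of_mem hyE]
        refine mul_le_mul_right ?_ _
        calc (∫⁻ x in S' y, ρ n x y ∂μ)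
            = ∫⁻ x in S' y, ρ n y x ∂μ := lintegral_congr fun x => hsymm n x y
          _ ≤ ∫⁻ x in {x | R₀ ≤ dist y x}, ρ n y x ∂μ := by
              refine lintegral_mono_set fun x hx => ?_
              have : R ≤ dist x y := hx.1
              rw [mem_setOf_eq, dist_comm]
              exact le_trans hR this
          _ ≤ C := hCb y n
      · rw [indicator_of_notMem hyE]
        have hSempty : S' y = ∅ := by
          rw [eq_empty_iff_forall_notMem]
          intro x hx
          obtain ⟨h1', h2', h3'⟩ := hx
          have hd : dist x y ≤ 3 * dist y x₀ := by
            have hxx : dist x x₀ ≤ 2 * dist y x₀ := by linarith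
            calc dist x y ≤ dist x x₀ + dist y x₀ := by
                  rw [dist_comm y x₀]; exact dist_triangle x x₀ y
              _ ≤ 2 * dist y x₀ + dist y x₀ := by linarith
              _ = 3 * dist y x₀ := by ring
          have hyE' : ¬ (R / 3 ≤ dist y x₀) := hyE
          push_neg at hyE'
          linarith
        rw [hSempty]
        simp
    calc (∫⁻ y, ∫⁻ x, F₂ (x, y) ∂μ ∂μ)
        ≤ ∫⁻ y, E.indicator (fun y => g y * C) y ∂μ := lintegral_mono hpt
      _ = ∫⁻ y in E, g y * C ∂μ := lintegral_indicator hE _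
      _ = (∫⁻ y in E, g y ∂μ) * C := lintegral_mul_const _ hg
  -- assemble
  calc (∫⁻ x, ∫⁻ y in
          {y | R ≤ dist x y ∧ dist x x₀ / 2 ≤ dist y x₀ ∧ dist y x₀ ≤ 2 * dist x x₀},
        ENNReal.ofReal (|u x - u y| ^ p) * ρ n x y ∂μ ∂μ)
      ≤ ∫⁻ x, ∫⁻ y, c * (F₁ (x, y) + F₂ (x, y)) ∂μ ∂μ := lintegral_mono key
    _ = ∫⁻ x, c * ((∫⁻ y, F₁ (x, y) ∂μ) + ∫⁻ y, F₂ (x, y) ∂μ) ∂μ := by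
        refine lintegral_congr fun x => ?_
        rw [lintegral_const_mul (f := fun y => F₁ (x, y) + F₂ (x, y)) _ ((hsec₁ x).add (hsec₂ x)),
          lintegral_add_left (hsec₁ x)]
    _ = c * ((∫⁻ x, ∫⁻ y, F₁ (x, y) ∂μ ∂μ) + ∫⁻ x, ∫⁻ y, F₂ (x, y) ∂μ ∂μ) := by
        rw [lintegral_const_mul (f := fun x => (∫⁻ y, F₁ (x, y) ∂μ) + ∫⁻ y, F₂ (x, y) ∂μ) _ (hAmeas.add hBmeas), lintegral_add_left hAmeas]
    _ ≤ c * ((∫⁻ x in E, g x ∂μ) * C + (∫⁻ x in E, g x ∂μ) * C) :=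
        mul_le_mul_right (add_le_add hA hB) _
    _ = K * ∫⁻ x in E, g x ∂μ := by rw [hKdef]; ring

/-- Estimate (2.12) in the proof of the generalized Maz'ya–Shaposhnikova formula:
the term `III(R,n)` satisfies `lim_{R→∞} limsup_{n→∞} III(R,n) = 0`. -/
theorem III_limsup_zero
    {X : Type*} [MetricSpace X] [CompleteSpace X] [TopologicalSpace.SeparableSpace X]
    [MeasurableSpace X] [BorelSpace X]
    (μ : Measure X) [IsLocallyFiniteMeasure μ] [μ.IsOpenPosMeasure]
    (p : ℝ) (hp : 1 ≤ p)
    (ρ : ℕ → X → X → ℝ≥0∞)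
    (hmeas : ∀ n, Measurable (Function.uncurry (ρ n)))
    (hsymm : ∀ n x y, ρ n x y = ρ n y x)
    (L : ℝ) (hL : 0 ≤ L)
    -- Assumption 1 (A)
    (hA : ∀ x : X,
      Tendsto (fun R : ℝ =>
          limsup (fun n => ∫⁻ y in {y | R ≤ dist x y}, ρ n x y ∂μ) atTop)
        atTop (nhds (ENNReal.ofReal L)) ∧
      Tendsto (fun R : ℝ =>
          liminf (fun n => ∫⁻ y in {y | R ≤ dist x y}, ρ n x y ∂μ) atTop)
        atTop (nhds (ENNReal.ofReal L)))
    -- Assumption 1 (C)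
    (hC : ∀ᶠ R : ℝ in atTop, ∃ C : ℝ≥0∞, C < ⊤ ∧
      ∀ (x : X) (n : ℕ), ∫⁻ y in {y | R ≤ dist x y}, ρ n x y ∂μ ≤ C)
    (x₀ : X) (u : X → ℝ) (hu : MemLp u (ENNReal.ofReal p) μ) :
    Tendsto (fun R : ℝ =>
        limsup (fun n =>
          ∫⁻ x, ∫⁻ y in
              {y | R ≤ dist x y ∧ dist x x₀ / 2 ≤ dist y x₀ ∧ dist y x₀ ≤ 2 * dist x x₀},
            ENNReal.ofReal (|u x - u y| ^ p) * ρ n x y ∂μ ∂μ) atTop)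
      atTop (nhds 0) := by
  haveI := UniformSpace.secondCountable_of_separable X
  haveI : SigmaFinite μ := inferInstance
  have hp0 : (0:ℝ) ≤ p := le_trans zero_le_one hp
  -- measurable representative
  obtain ⟨v, hvmeas, hv⟩ : ∃ v : X → ℝ, Measurable v ∧ u =ᵐ[μ] v := by
    rcases hu.1 with ⟨v, hv1, hv2⟩
    exact ⟨v, hv1.measurable, hv2⟩
  have hvLp : MemLp v (ENNReal.ofReal p) μ := hu.ae_eq hv
  -- finiteness of the p-energy of v
  have hfin : ∫⁻ x, ENNReal.ofReal (|v x| ^ p) ∂μ ≠ ⊤ := by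
    have hp0' : (ENNReal.ofReal p) ≠ 0 := by
      simp only [ne_eq, ENNReal.ofReal_eq_zero, not_le]
      linarith
    have hint := hvLp.integrable_norm_rpow hp0' ENNReal.ofReal_ne_top
    rw [ENNReal.toReal_ofReal hp0] at hint
    have h2 := hint.2
    rw [hasFiniteIntegral_iff_norm] at h2
    have heq : ∀ x, ENNReal.ofReal (|v x| ^ p) = ENNReal.ofReal ‖‖v x‖ ^ p‖ := by
      intro x
      rw [Real.norm_of_nonneg (Real.rpow_nonneg (norm_nonneg _) p), Real.norm_eq_abs]
    rw [lintegral_congr heq]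
    exact h2.ne
  -- replace u by v in the statement
  have hIeq : (fun R : ℝ =>
        limsup (fun n =>
          ∫⁻ x, ∫⁻ y in
              {y | R ≤ dist x y ∧ dist x x₀ / 2 ≤ dist y x₀ ∧ dist y x₀ ≤ 2 * dist x x₀},
            ENNReal.ofReal (|u x - u y| ^ p) * ρ n x y ∂μ ∂μ) atTop)
      = (fun R : ℝ =>
        limsup (fun n =>
          ∫⁻ x, ∫⁻ y in
              {y | R ≤ dist x y ∧ dist x x₀ / 2 ≤ dist y x₀ ∧ dist y x₀ ≤ 2 * dist x x₀},
            ENNReal.ofReal (|v x - v y| ^ p) * ρ n x y ∂μ ∂μ) atTop) := by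
    funext R
    congr 1
    funext n
    refine lintegral_congr_ae ?_
    filter_upwards [hv] with x hx
    refine lintegral_congr_ae ?_
    filter_upwards [ae_restrict_of_ae hv] with y hy
    rw [hx, hy]
  rw [hIeq]
  exact III_aux μ p hp ρ hmeas hsymm hC x₀ v hvmeas hfin
end

section
/- Let (X,d,m) be a metric measure space admitting the generalized asymptotic volume ratio AVR^V associated to V, and suppose there exists k > 0 such that m(B_r(x)) ≤ k V(r) for every x ∈ X and every sufficiently large r > 0. Let p ≥ 1 and let (ρ_n)_{n∈ℕ} be mollifiers of radial type satisfying the approximation of the identity associated to V (Condition 3). Then (ρ_n)_{n∈ℕ} satisfies Assumption 1 with constant L = AVR^V. -/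
open MeasureTheory Filter Topology Metric Set ENNReal

/-- The nonlocal energy `E_ρ(u) = ∬_{x ≠ y} |u(x) - u(y)|^p ρ(x,y) dm(x) dm(y)`. -/
noncomputable def energy {X : Type*} [MeasurableSpace X] (μ : Measure X) (p : ℝ)
    (ρ : X → X → ℝ≥0∞) (u : X → ℝ) : ℝ≥0∞ :=
  ∫⁻ x, ∫⁻ y in {y | y ≠ x}, ENNReal.ofReal (|u x - u y| ^ p) * ρ x y ∂μ ∂μ

set_option linter.unusedSectionVars false
set_option maxHeartbeats 1000000


-- basic aux lemmas about g = ρt n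
section Aux
variable {g : ℝ → ℝ}

lemma aux_pos (h0 : ∀ r > (0:ℝ), 0 ≤ g r) (ha : StrictAntiOn g (Set.Ioi 0)) :
    ∀ r > (0:ℝ), 0 < g r := fun r hr =>
  lt_of_le_of_lt (h0 _ (by linarith)) (ha hr (by simp; linarith) (lt_add_one r))

lemma aux_hasDerivAt (hC : ContDiffOn ℝ 1 g (Set.Ioi 0)) {r : ℝ} (hr : 0 < r) :
    HasDerivAt g (deriv g r) r := by
  have := (hC.differentiableOn one_ne_zero).differentiableAt (isOpen_Ioi.mem_nhds hr)
  exact this.hasDerivAt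

lemma aux_deriv_nonpos (hC : ContDiffOn ℝ 1 g (Set.Ioi 0)) (ha : StrictAntiOn g (Set.Ioi 0))
    {r : ℝ} (hr : 0 < r) : deriv g r ≤ 0 := by
  have hd := (aux_hasDerivAt hC hr).hasDerivWithinAt (s := Set.Ioi r)
  rw [hasDerivWithinAt_iff_tendsto_slope] at hd
  have hss : Set.Ioi r \ {r} = Set.Ioi r := by simp
  rw [hss] at hd
  refine le_of_tendsto hd ?_
  filter_upwards [self_mem_nhdsWithin] with s hs
  have hs' : r < s := hs
  have : g s < g r := ha hr (lt_trans hr hs') hs'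
  rw [slope_def_field]
  exact div_nonpos_of_nonpos_of_nonneg (by linarith) (by linarith)

lemma aux_contOn_deriv (hC : ContDiffOn ℝ 1 g (Set.Ioi 0)) :
    ContinuousOn (deriv g) (Set.Ioi 0) := by
  have h := hC.continuousOn_derivWithin isOpen_Ioi.uniqueDiffOn le_rfl
  refine h.congr fun r hr => ?_
  exact (derivWithin_of_isOpen isOpen_Ioi hr).symm
end Aux


section Aux
variable {g V : ℝ → ℝ}

-- V facts
lemma aux_V_pos (hV0 : 0 ≤ V 0) (hVmono : StrictMonoOn V (Set.Ici 0)) {r : ℝ} (hr : 0 < r) :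
    0 < V r := lt_of_le_of_lt hV0 (hVmono self_mem_Ici (le_of_lt hr) hr)

lemma aux_V_hasDerivAt (hVC1 : ContDiffOn ℝ 1 V (Set.Ici 0)) {r : ℝ} (hr : 0 < r) :
    HasDerivAt V (deriv V r) r := by
  have h1 : Set.Ici (0:ℝ) ∈ nhds r := Ici_mem_nhds hr
  have := ((hVC1.differentiableOn one_ne_zero) r (le_of_lt hr)).differentiableAt h1
  exact this.hasDerivAt

lemma aux_V_deriv_nonneg (hVC1 : ContDiffOn ℝ 1 V (Set.Ici 0))
    (hVmono : StrictMonoOn V (Set.Ici 0)) {r : ℝ} (hr : 0 < r) : 0 ≤ deriv V r := by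
  have hd := (aux_V_hasDerivAt hVC1 hr).hasDerivWithinAt (s := Set.Ioi r)
  rw [hasDerivWithinAt_iff_tendsto_slope] at hd
  rw [show Set.Ioi r \ {r} = Set.Ioi r by simp] at hd
  refine ge_of_tendsto hd ?_
  filter_upwards [self_mem_nhdsWithin] with s hs
  have hs' : r < s := hs
  have : V r < V s := hVmono (le_of_lt hr) (Set.mem_Ici.2 (by linarith)) hs'
  rw [slope_def_field]
  exact div_nonneg (by linarith) (by linarith)

lemma aux_V_contOn_deriv (hVC1 : ContDiffOn ℝ 1 V (Set.Ici 0)) :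
    ContinuousOn (deriv V) (Set.Ioi 0) := by
  have h := hVC1.continuousOn_derivWithin (uniqueDiffOn_Ici 0) le_rfl
  refine (h.mono Ioi_subset_Ici_self).congr fun r hr => ?_
  have : DifferentiableAt ℝ V r :=
    ((hVC1.differentiableOn one_ne_zero) r (le_of_lt (Set.mem_Ioi.1 hr))).differentiableAt (Ici_mem_nhds hr)
  exact (derivWithin_of_mem_nhds (Ici_mem_nhds hr)).symm

-- g → 0 at top
lemma aux_g_tendsto_zero (h0 : ∀ r > (0:ℝ), 0 ≤ g r)
    (hgV : Tendsto (fun r => g r * V r) atTop (nhds 0))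
    (hVtop : Tendsto V atTop atTop) : Tendsto g atTop (nhds 0) := by
  have h1 : ∀ᶠ r in atTop, g r ≤ g r * V r := by
    filter_upwards [hVtop.eventually_ge_atTop 1, eventually_gt_atTop 0] with r h1 h2
    nlinarith [h0 r h2]
  have h2 : ∀ᶠ r in atTop, (0:ℝ) ≤ g r := by
    filter_upwards [eventually_gt_atTop 0] with r h2 using h0 r h2
  exact tendsto_of_tendsto_of_tendsto_of_le_of_le' tendsto_const_nhds hgV h2 h1
end Aux


section Aux
variable {g : ℝ → ℝ}

lemma aux_ftc_int (hC : ContDiffOn ℝ 1 g (Set.Ioi 0))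
    (hd0 : ∀ r > (0:ℝ), deriv g r ≤ 0)
    (hg0 : Tendsto g atTop (nhds 0)) {a : ℝ} (ha : 0 < a) :
    IntegrableOn (fun r => -deriv g r) (Set.Ioi a) ∧
      ∫ r in Set.Ioi a, (-deriv g r) = g a := by
  have hdiff : ∀ x ∈ Set.Ioi a, HasDerivAt (fun r => -g r) (-deriv g x) x := by
    intro x hx
    have hx0 : 0 < x := lt_trans ha hx
    have := ((hC.differentiableOn one_ne_zero).differentiableAt
        (isOpen_Ioi.mem_nhds hx0)).hasDerivAt
    exact this.neg
  have hcont : ContinuousWithinAt (fun r => -g r) (Set.Ici a) a := by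
    have : DifferentiableAt ℝ g a :=
      (hC.differentiableOn one_ne_zero).differentiableAt (isOpen_Ioi.mem_nhds ha)
    exact (this.continuousAt.neg).continuousWithinAt
  have hnn : ∀ x ∈ Set.Ioi a, 0 ≤ -deriv g x := fun x hx =>
    neg_nonneg.2 (hd0 x (lt_trans ha hx))
  have hlim : Tendsto (fun r => -g r) atTop (nhds 0) := by
    simpa using hg0.neg
  refine ⟨integrableOn_Ioi_deriv_of_nonneg hcont hdiff hnn hlim, ?_⟩
  have := integral_Ioi_of_hasDerivAt_of_nonneg hcont hdiff hnn hlim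
  simpa using this

lemma aux_ftc_lintegral (hC : ContDiffOn ℝ 1 g (Set.Ioi 0))
    (hd0 : ∀ r > (0:ℝ), deriv g r ≤ 0)
    (hg0 : Tendsto g atTop (nhds 0)) {a : ℝ} (ha : 0 < a) :
    ∫⁻ r in Set.Ioi a, ENNReal.ofReal (-deriv g r) = ENNReal.ofReal (g a) := by
  obtain ⟨hint, hval⟩ := aux_ftc_int hC hd0 hg0 ha
  rw [← ofReal_integral_eq_lintegral_ofReal hint ?_, hval]
  exact (ae_restrict_iff' measurableSet_Ioi).2 (ae_of_all _ fun x hx =>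
    neg_nonneg.2 (hd0 x (lt_trans ha hx)))
end Aux

section IBP
variable {g V : ℝ → ℝ}

lemma aux_sup {R : ℝ} (f : ℝ → ℝ≥0∞) (hf : AEMeasurable f (volume.restrict (Set.Ioi R))) :
    ∫⁻ r in Set.Ioi R, f r = ⨆ m : ℕ, ∫⁻ r in Set.Ioc R (R + 1 + m), f r := by
  set ν := volume.restrict (Set.Ioi R) with hν
  set φ : ℕ → ℝ → ℝ≥0∞ := fun m => (Set.Iic (R + 1 + (m:ℝ))).indicator f with hφ
  have hmono : ∀ r, Monotone fun m => φ m r := by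
    intro r a b hab
    exact Set.indicator_le_indicator_of_subset
      (Set.Iic_subset_Iic.2 (by have := (Nat.cast_le (α := ℝ)).2 hab; linarith))
      (fun _ => zero_le) r
  have hsup : ∀ r, ⨆ m, φ m r = f r := by
    intro r
    refine le_antisymm (iSup_le fun m => Set.indicator_le_self _ _ r) ?_
    obtain ⟨m, hm⟩ := exists_nat_ge (r - R - 1)
    refine le_iSup_of_le m ?_
    rw [hφ]
    simp only [Set.indicator_apply, Set.mem_Iic]
    rw [if_pos (by linarith)]
  have key : ∫⁻ r, f r ∂ν = ⨆ m, ∫⁻ r, φ m r ∂ν := by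
    rw [← lintegral_iSup' (fun m => hf.indicator measurableSet_Iic)
      (ae_of_all _ hmono)]
    exact lintegral_congr fun r => (hsup r).symm
  rw [key]
  congr 1
  funext m
  rw [hφ]
  simp only
  rw [lintegral_indicator measurableSet_Iic, hν, Measure.restrict_restrict measurableSet_Iic]
  congr 2
  rw [Set.inter_comm, Set.Ioi_inter_Iic]

lemma aux_ibp (hC : ContDiffOn ℝ 1 g (Set.Ioi 0))
    (h0 : ∀ r > (0:ℝ), 0 ≤ g r)
    (hd0 : ∀ r > (0:ℝ), deriv g r ≤ 0)
    (hV0 : 0 ≤ V 0) (hVmono : StrictMonoOn V (Set.Ici 0))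
    (hVC1 : ContDiffOn ℝ 1 V (Set.Ici 0))
    (hgV : Tendsto (fun r => g r * V r) atTop (nhds 0))
    {R : ℝ} (hR : 0 < R) :
    ∫⁻ r in Set.Ioi R, ENNReal.ofReal (-deriv g r * V r)
      = ENNReal.ofReal (g R * V R) + ∫⁻ r in Set.Ioi R, ENNReal.ofReal (deriv V r * g r) := by
  have hgc : ContinuousOn g (Set.Ioi 0) := hC.continuousOn
  have hVc : ContinuousOn V (Set.Ici 0) := hVC1.continuousOn
  have hg'c : ContinuousOn (deriv g) (Set.Ioi 0) := aux_contOn_deriv hC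
  have hV'c : ContinuousOn (deriv V) (Set.Ioi 0) := aux_V_contOn_deriv hVC1
  set T : ℕ → ℝ := fun m => R + 1 + m with hTdef
  have hTR : ∀ m, R ≤ T m := fun m => by
    have : (0:ℝ) ≤ m := Nat.cast_nonneg m
    simp only [hTdef]; linarith
  have hT0 : ∀ m, 0 < T m := fun m => lt_of_lt_of_le hR (hTR m)
  -- real FTC claim on Ioc R (T m)
  have hsub1 : ∀ m, Set.uIcc R (T m) ⊆ Set.Ioi 0 := by
    intro m
    rw [Set.uIcc_of_le (hTR m)]
    intro r hr
    exact lt_of_lt_of_le hR hr.1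
  have hsub2 : ∀ m, Set.uIcc R (T m) ⊆ Set.Ici 0 := fun m =>
    (hsub1 m).trans Set.Ioi_subset_Ici_self
  have hInt2 : ∀ m, IntervalIntegrable (fun r => deriv V r * g r) volume R (T m) := fun m =>
    ((hV'c.mono (hsub1 m)).mul (hgc.mono (hsub1 m))).intervalIntegrable
  have hInt3 : ∀ m, IntervalIntegrable (fun r => deriv V r * g r + V r * deriv g r)
      volume R (T m) := fun m =>
    (((hV'c.mono (hsub1 m)).mul (hgc.mono (hsub1 m))).add
      ((hVc.mono (hsub2 m)).mul (hg'c.mono (hsub1 m)))).intervalIntegrable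
  have hInt1 : ∀ m, IntervalIntegrable (fun r => -deriv g r * V r) volume R (T m) := fun m =>
    (((hg'c.mono (hsub1 m)).neg).mul (hVc.mono (hsub2 m))).intervalIntegrable
  have hreal : ∀ m, ∫ r in Set.Ioc R (T m), (-deriv g r * V r)
      = (∫ r in Set.Ioc R (T m), deriv V r * g r) + g R * V R - g (T m) * V (T m) := by
    intro m
    have hD : ∀ r ∈ Set.uIcc R (T m),
        HasDerivAt (fun s => V s * g s) (deriv V r * g r + V r * deriv g r) r := by
      intro r hr
      have hr0 : 0 < r := hsub1 m hr
      exact (aux_V_hasDerivAt hVC1 hr0).mul (aux_hasDerivAt hC hr0)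
    have h1 := intervalIntegral.integral_eq_sub_of_hasDerivAt hD (hInt3 m)
    have h2 : ∫ r in R..(T m), (-deriv g r * V r)
        = (∫ r in R..(T m), deriv V r * g r)
          - ∫ r in R..(T m), (deriv V r * g r + V r * deriv g r) := by
      rw [← intervalIntegral.integral_sub (hInt2 m) (hInt3 m)]
      apply intervalIntegral.integral_congr
      intro r _
      ring
    rw [h1] at h2
    rw [← intervalIntegral.integral_of_le (hTR m), ← intervalIntegral.integral_of_le (hTR m)]
    rw [h2]; ring
  -- ENNReal versions of the finite pieces
  have hIoc_sub : ∀ m, Set.Ioc R (T m) ⊆ Set.Ioi 0 := fun m r hr => lt_trans hR hr.1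
  have hA : ∀ m, ∫⁻ r in Set.Ioc R (T m), ENNReal.ofReal (-deriv g r * V r)
      = ENNReal.ofReal (∫ r in Set.Ioc R (T m), (-deriv g r * V r)) := by
    intro m
    rw [ofReal_integral_eq_lintegral_ofReal
      ((intervalIntegrable_iff_integrableOn_Ioc_of_le (hTR m)).1 (hInt1 m))
      ((ae_restrict_iff' measurableSet_Ioc).2 (ae_of_all _ fun r hr => ?_))]
    have hr0 : 0 < r := hIoc_sub m hr
    exact mul_nonneg (neg_nonneg.2 (hd0 r hr0)) (le_of_lt (aux_V_pos hV0 hVmono hr0))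
  have hB : ∀ m, ∫⁻ r in Set.Ioc R (T m), ENNReal.ofReal (deriv V r * g r)
      = ENNReal.ofReal (∫ r in Set.Ioc R (T m), deriv V r * g r) := by
    intro m
    rw [ofReal_integral_eq_lintegral_ofReal
      ((intervalIntegrable_iff_integrableOn_Ioc_of_le (hTR m)).1 (hInt2 m))
      ((ae_restrict_iff' measurableSet_Ioc).2 (ae_of_all _ fun r hr => ?_))]
    have hr0 : 0 < r := hIoc_sub m hr
    exact mul_nonneg (aux_V_deriv_nonneg hVC1 hVmono hr0) (h0 r hr0)
  -- nonnegativity of real pieces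
  have hbnn : ∀ m, 0 ≤ ∫ r in Set.Ioc R (T m), deriv V r * g r := by
    intro m
    refine setIntegral_nonneg measurableSet_Ioc fun r hr => ?_
    have hr0 : 0 < r := hIoc_sub m hr
    exact mul_nonneg (aux_V_deriv_nonneg hVC1 hVmono hr0) (h0 r hr0)
  have hann : ∀ m, 0 ≤ ∫ r in Set.Ioc R (T m), (-deriv g r * V r) := by
    intro m
    refine setIntegral_nonneg measurableSet_Ioc fun r hr => ?_
    have hr0 : 0 < r := hIoc_sub m hr
    exact mul_nonneg (neg_nonneg.2 (hd0 r hr0)) (le_of_lt (aux_V_pos hV0 hVmono hr0))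
  have hcnn : 0 ≤ g R * V R := mul_nonneg (h0 R hR) (le_of_lt (aux_V_pos hV0 hVmono hR))
  have hennn : ∀ m, 0 ≤ g (T m) * V (T m) := fun m =>
    mul_nonneg (h0 _ (hT0 m)) (le_of_lt (aux_V_pos hV0 hVmono (hT0 m)))
  -- measurability for aux_sup
  have hIoiR0 : Set.Ioi R ⊆ Set.Ioi 0 := fun r hr => lt_trans hR hr
  have hmf1 : AEMeasurable (fun r => ENNReal.ofReal (-deriv g r * V r))
      (volume.restrict (Set.Ioi R)) := by
    refine ENNReal.measurable_ofReal.comp_aemeasurable ?_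
    exact ((measurable_deriv g).neg.aemeasurable.mul
      ((hVc.mono (hIoiR0.trans Set.Ioi_subset_Ici_self)).aemeasurable measurableSet_Ioi))
  have hmf2 : AEMeasurable (fun r => ENNReal.ofReal (deriv V r * g r))
      (volume.restrict (Set.Ioi R)) := by
    refine ENNReal.measurable_ofReal.comp_aemeasurable ?_
    exact ((hV'c.mono hIoiR0).aemeasurable measurableSet_Ioi).mul
      ((hgc.mono hIoiR0).aemeasurable measurableSet_Ioi)
  rw [aux_sup _ hmf1, aux_sup _ hmf2]
  -- monotone sequences
  set A : ℕ → ℝ≥0∞ := fun m => ∫⁻ r in Set.Ioc R (R + 1 + m), ENNReal.ofReal (-deriv g r * V r)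
    with hAdef
  set B : ℕ → ℝ≥0∞ := fun m => ∫⁻ r in Set.Ioc R (R + 1 + m), ENNReal.ofReal (deriv V r * g r)
    with hBdef
  have hTmono : ∀ a b : ℕ, a ≤ b → Set.Ioc R (R + 1 + (a:ℝ)) ⊆ Set.Ioc R (R + 1 + (b:ℝ)) := by
    intro a b hab
    apply Set.Ioc_subset_Ioc_right
    have := (Nat.cast_le (α := ℝ)).2 hab; linarith
  have hAmono : Monotone A := fun a b hab => lintegral_mono_set (hTmono a b hab)
  have hBmono : Monotone B := fun a b hab => lintegral_mono_set (hTmono a b hab)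
  have hAtend : Tendsto A atTop (nhds (⨆ m, A m)) := tendsto_atTop_iSup hAmono
  have hBtend : Tendsto B atTop (nhds (⨆ m, B m)) := tendsto_atTop_iSup hBmono
  -- A m = (B m + c') - E m
  set c' : ℝ≥0∞ := ENNReal.ofReal (g R * V R) with hc'
  set E : ℕ → ℝ≥0∞ := fun m => ENNReal.ofReal (g (T m) * V (T m)) with hE
  have hAeq : ∀ m, A m = (B m + c') - E m := by
    intro m
    rw [hAdef]
    simp only
    rw [hA m, hreal m, ENNReal.ofReal_sub _ (hennn m), ENNReal.ofReal_add (hbnn m) hcnn]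
    rw [hBdef, hc', hE]
    simp only
    rw [hB m]
  -- limits
  have hTtend : Tendsto T atTop atTop := by
    apply tendsto_atTop_add_const_left
    exact tendsto_natCast_atTop_atTop
  have hEtend : Tendsto E atTop (nhds 0) := by
    have := ENNReal.tendsto_ofReal (hgV.comp hTtend)
    simpa using this
  have hAtend' : Tendsto A atTop (nhds (((⨆ m, B m) + c') - 0)) := by
    have h := ENNReal.Tendsto.sub (hBtend.add (tendsto_const_nhds (x := c'))) hEtend
      (Or.inr (by simp))
    exact h.congr fun m => (hAeq m).symm
  have := tendsto_nhds_unique hAtend hAtend'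
  rw [this, tsub_zero, add_comm]


section Core
variable {X : Type*} [MetricSpace X] [TopologicalSpace.SeparableSpace X]
  [MeasurableSpace X] [BorelSpace X]

lemma aux_core (μ : Measure X) [IsLocallyFiniteMeasure μ] {g : ℝ → ℝ}
    (hC : ContDiffOn ℝ 1 g (Set.Ioi 0))
    (hd0 : ∀ r > (0:ℝ), deriv g r ≤ 0)
    (hg0 : Tendsto g atTop (nhds 0)) (x : X) {R : ℝ} (hR : 0 < R) :
    ∫⁻ y in {y | R ≤ dist x y}, ENNReal.ofReal (g (dist x y)) ∂μ
      = ∫⁻ r in Set.Ioi R,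
          ENNReal.ofReal (-deriv g r) * μ ({y | R ≤ dist x y} ∩ ball x r) := by
  haveI : SecondCountableTopology X := UniformSpace.secondCountable_of_separable X
  haveI : SigmaFinite μ := sigmaFinite_of_locallyFinite
  set S : Set X := {y | R ≤ dist x y} with hS
  have hSm : MeasurableSet S := by
    have : IsClosed S := isClosed_le continuous_const (continuous_const.dist continuous_id)
    exact this.measurableSet
  set h : ℝ → ℝ≥0∞ := fun r => ENNReal.ofReal (-deriv g r) with hh
  have hhm : Measurable h := ((measurable_deriv g).neg).ennreal_ofReal
  -- step 1 : pointwise FTC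
  have step1 : ∫⁻ y in S, ENNReal.ofReal (g (dist x y)) ∂μ
      = ∫⁻ y in S, ∫⁻ r, (Set.Ioi (dist x y)).indicator h r ∂(volume) ∂μ := by
    refine setLIntegral_congr_fun hSm (fun y hy => ?_)
    have hd : 0 < dist x y := lt_of_lt_of_le hR hy
    rw [lintegral_indicator measurableSet_Ioi]
    exact (aux_ftc_lintegral hC hd0 hg0 hd).symm
  rw [step1]
  -- step 2 : swap
  have hswap : ∫⁻ y, ∫⁻ r, (Set.Ioi (dist x y)).indicator h r ∂(volume) ∂(μ.restrict S)
      = ∫⁻ r, ∫⁻ y, (Set.Ioi (dist x y)).indicator h r ∂(μ.restrict S) ∂(volume) := by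
    apply lintegral_lintegral_swap
    have hA : MeasurableSet {p : X × ℝ | dist x p.1 < p.2} :=
      (isOpen_lt (continuous_const.dist continuous_fst) continuous_snd).measurableSet
    have : Function.uncurry (fun y r => (Set.Ioi (dist x y)).indicator h r)
        = Set.indicator {p : X × ℝ | dist x p.1 < p.2} (fun p => h p.2) := by
      funext p
      simp only [Function.uncurry, Set.indicator_apply, Set.mem_Ioi, Set.mem_setOf_eq]
    rw [this]
    exact ((hhm.comp measurable_snd).indicator hA).aemeasurable
  rw [hswap]
  -- step 3 : inner integral
  have step3 : ∀ r : ℝ, ∫⁻ y, (Set.Ioi (dist x y)).indicator h r ∂(μ.restrict S)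
      = h r * μ (S ∩ ball x r) := by
    intro r
    have hb : MeasurableSet {y : X | dist x y < r} :=
      (isOpen_lt (continuous_const.dist continuous_id) continuous_const).measurableSet
    have : (fun y => (Set.Ioi (dist x y)).indicator h r)
        = Set.indicator {y : X | dist x y < r} (fun _ => h r) := by
      funext y
      simp only [Set.indicator_apply, Set.mem_Ioi, Set.mem_setOf_eq]
    rw [this, lintegral_indicator hb, setLIntegral_const, Measure.restrict_apply hb]
    have hset : {y : X | dist x y < r} ∩ S = S ∩ ball x r := by
      ext y
      simp only [Set.mem_inter_iff, Set.mem_setOf_eq, mem_ball, hS, dist_comm]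
      tauto
    rw [hset]
  simp_rw [step3]
  -- step 4 : restrict to Ioi R
  rw [← lintegral_indicator measurableSet_Ioi]
  refine lintegral_congr fun r => ?_
  rw [Set.indicator_apply]
  split_ifs with hr
  · rfl
  · simp only [Set.mem_Ioi, not_lt] at hr
    have : S ∩ ball x r = ∅ := by
      ext y
      simp only [Set.mem_inter_iff, Set.mem_setOf_eq, mem_ball, Set.mem_empty_iff_false,
        iff_false, not_and, hS]
      intro h1 h2
      rw [dist_comm] at h2
      linarith
    rw [this]
    simp
end Core

section Bounds
variable {X : Type*} [MetricSpace X] [TopologicalSpace.SeparableSpace X]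
  [MeasurableSpace X] [BorelSpace X]

lemma aux_S_meas (x : X) (R : ℝ) : MeasurableSet {y : X | R ≤ dist x y} :=
  (isClosed_le continuous_const (continuous_const.dist continuous_id)).measurableSet

lemma aux_upper (μ : Measure X) [IsLocallyFiniteMeasure μ] {g V : ℝ → ℝ}
    (hC : ContDiffOn ℝ 1 g (Set.Ioi 0))
    (h0 : ∀ r > (0:ℝ), 0 ≤ g r)
    (hd0 : ∀ r > (0:ℝ), deriv g r ≤ 0)
    (hg0 : Tendsto g atTop (nhds 0))
    (hV0 : 0 ≤ V 0) (hVmono : StrictMonoOn V (Set.Ici 0))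
    (hVC1 : ContDiffOn ℝ 1 V (Set.Ici 0))
    (hgV : Tendsto (fun r => g r * V r) atTop (nhds 0))
    (x : X) {R : ℝ} (hR : 0 < R) (c : ℝ≥0∞) (hc : c ≠ ⊤)
    (hball : ∀ r, R < r → μ (ball x r) ≤ c * ENNReal.ofReal (V r)) :
    ∫⁻ y in {y | R ≤ dist x y}, ENNReal.ofReal (g (dist x y)) ∂μ
      ≤ c * (ENNReal.ofReal (g R * V R)
          + ∫⁻ r in Set.Ioi R, ENNReal.ofReal (deriv V r * g r)) := by
  rw [aux_core μ hC hd0 hg0 x hR, ← aux_ibp hC h0 hd0 hV0 hVmono hVC1 hgV hR,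
    ← lintegral_const_mul' c _ hc]
  refine lintegral_mono_ae ((ae_restrict_iff' measurableSet_Ioi).2 (ae_of_all _
    fun r hr => ?_))
  have hr0 : 0 < r := lt_trans hR hr
  calc ENNReal.ofReal (-deriv g r) * μ ({y | R ≤ dist x y} ∩ ball x r)
      ≤ ENNReal.ofReal (-deriv g r) * (c * ENNReal.ofReal (V r)) :=
        mul_le_mul_right (le_trans (measure_mono Set.inter_subset_right) (hball r hr)) _
    _ = c * ENNReal.ofReal (-deriv g r * V r) := by
        rw [ENNReal.ofReal_mul (neg_nonneg.2 (hd0 r hr0))]; ring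

lemma aux_lower (μ : Measure X) [IsLocallyFiniteMeasure μ] {g : ℝ → ℝ}
    (hC : ContDiffOn ℝ 1 g (Set.Ioi 0))
    (hd0 : ∀ r > (0:ℝ), deriv g r ≤ 0)
    (hg0 : Tendsto g atTop (nhds 0))
    (x : X) {R : ℝ} (hR : 0 < R) (hfin : μ (ball x R) ≠ ⊤) :
    ∫⁻ r in Set.Ioi R, ENNReal.ofReal (-deriv g r) * μ (ball x r)
      ≤ (∫⁻ y in {y | R ≤ dist x y}, ENNReal.ofReal (g (dist x y)) ∂μ)
        + μ (ball x R) * ENNReal.ofReal (g R) := by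
  rw [aux_core μ hC hd0 hg0 x hR]
  have key : ∀ r ∈ Set.Ioi R,
      ENNReal.ofReal (-deriv g r) * μ (ball x r)
        ≤ ENNReal.ofReal (-deriv g r) * μ ({y | R ≤ dist x y} ∩ ball x r)
          + ENNReal.ofReal (-deriv g r) * μ (ball x R) := by
    intro r _
    rw [← mul_add]
    refine mul_le_mul_right ?_ _
    refine le_trans (measure_mono ?_) (measure_union_le _ _)
    intro y hy
    rcases le_or_gt R (dist x y) with h | h
    · exact Or.inl ⟨h, hy⟩
    · exact Or.inr (by rw [mem_ball, dist_comm]; exact h)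
  calc ∫⁻ r in Set.Ioi R, ENNReal.ofReal (-deriv g r) * μ (ball x r)
      ≤ ∫⁻ r in Set.Ioi R, (ENNReal.ofReal (-deriv g r) * μ ({y | R ≤ dist x y} ∩ ball x r)
          + ENNReal.ofReal (-deriv g r) * μ (ball x R)) :=
        lintegral_mono_ae ((ae_restrict_iff' measurableSet_Ioi).2 (ae_of_all _ key))
    _ = (∫⁻ r in Set.Ioi R, ENNReal.ofReal (-deriv g r) * μ ({y | R ≤ dist x y} ∩ ball x r))
          + ∫⁻ r in Set.Ioi R, ENNReal.ofReal (-deriv g r) * μ (ball x R) := by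
        rw [lintegral_add_right]
        exact ((measurable_deriv g).neg.ennreal_ofReal).mul_const _
    _ ≤ (∫⁻ r in Set.Ioi R, ENNReal.ofReal (-deriv g r) * μ ({y | R ≤ dist x y} ∩ ball x r))
          + μ (ball x R) * ENNReal.ofReal (g R) := by
        refine add_le_add_right (le_of_eq ?_) _
        rw [lintegral_mul_const' _ _ hfin, aux_ftc_lintegral hC hd0 hg0 hR,
          mul_comm]

lemma aux_dom (μ : Measure X) {g h : ℝ → ℝ} {c : ℝ} (hc : 0 ≤ c)
    (x : X) (R : ℝ) (hgh : ∀ d, R ≤ d → g d ≤ c * h d) :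
    ∫⁻ y in {y | R ≤ dist x y}, ENNReal.ofReal (g (dist x y)) ∂μ
      ≤ ENNReal.ofReal c * ∫⁻ y in {y | R ≤ dist x y}, ENNReal.ofReal (h (dist x y)) ∂μ := by
  rw [← lintegral_const_mul' _ _ ENNReal.ofReal_ne_top]
  refine lintegral_mono_ae ((ae_restrict_iff' (aux_S_meas x R)).2 (ae_of_all _ fun y hy => ?_))
  rw [← ENNReal.ofReal_mul hc]
  exact ENNReal.ofReal_le_ofReal (hgh _ hy)
end Bounds

/-- Lemma 2.11: if a metric measure space admits the generalized asymptotic volume ratio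
associated to `V` and its balls satisfy `m(B_r(x)) ≤ k V(r)` for all large `r`, then radial
mollifiers satisfying Condition 3 satisfy Assumption 1 with `L = AVR^V`. -/
theorem radial_mollifiers_satisfy_assumption1
    {X : Type*} [MetricSpace X] [CompleteSpace X] [TopologicalSpace.SeparableSpace X]
    [MeasurableSpace X] [BorelSpace X]
    (μ : Measure X) [IsLocallyFiniteMeasure μ] [μ.IsOpenPosMeasure]
    (p : ℝ) (hp : 1 ≤ p)
    -- `V` is a `C¹` strictly increasing function on `[0,∞)` with `V(t) → ∞`
    (V : ℝ → ℝ) (hV0 : 0 ≤ V 0) (hVmono : StrictMonoOn V (Set.Ici 0))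
    (hVC1 : ContDiffOn ℝ 1 V (Set.Ici 0)) (hVtop : Tendsto V atTop atTop)
    -- generalized asymptotic volume ratio associated to `V`
    (AVR : ℝ≥0∞)
    (hAVR : ∀ x₀ : X, Tendsto (fun r : ℝ => μ (ball x₀ r) / ENNReal.ofReal (V r))
      atTop (nhds AVR))
    -- volume upper bound `m(B_r(x)) ≤ k V(r)` for all large `r`
    (k : ℝ) (hk : 0 < k)
    (hvol : ∃ R₁ : ℝ, ∀ (x : X), ∀ r ≥ R₁, μ (ball x r) ≤ ENNReal.ofReal (k * V r))
    -- Condition 3: mollifiers of radial type, approximation of the identity associated to `V`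
    (ρt : ℕ → ℝ → ℝ)
    (hρ_nonneg : ∀ (n : ℕ), ∀ r > (0:ℝ), 0 ≤ ρt n r)
    (hρ_anti : ∀ n, StrictAntiOn (ρt n) (Set.Ioi 0))
    (hρ_C1 : ∀ n, ContDiffOn ℝ 1 (ρt n) (Set.Ioi 0))
    -- Condition 3 (A)
    (hρ_lim : ∀ r > (0:ℝ), Tendsto (fun n => ρt n r) atTop (nhds 0))
    (hρ_V : ∀ n, Tendsto (fun r => ρt n r * V r) atTop (nhds 0))
    -- Condition 3 (B)
    (hρ_ratio : ∀ i j : ℕ, i < j → MonotoneOn (fun r => ρt j r / ρt i r) (Set.Ioi 0))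
    -- Condition 3 (C): `lim_{R→∞} lim_{n→∞} ∫_R^∞ S(r) ρ̃_n(r) dr = 1`
    (I : ℝ → ℝ)
    (hI : ∀ R > (0:ℝ), Tendsto (fun n => ∫ r in Set.Ioi R, deriv V r * ρt n r) atTop (nhds (I R)))
    (hI_one : Tendsto I atTop (nhds 1)) :
    -- Assumption 1 (A) with L = AVR
    (∀ x : X,
      Tendsto (fun R : ℝ =>
          limsup (fun n =>
            ∫⁻ y in {y | R ≤ dist x y}, ENNReal.ofReal (ρt n (dist x y)) ∂μ) atTop)
        atTop (nhds AVR) ∧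
      Tendsto (fun R : ℝ =>
          liminf (fun n =>
            ∫⁻ y in {y | R ≤ dist x y}, ENNReal.ofReal (ρt n (dist x y)) ∂μ) atTop)
        atTop (nhds AVR)) ∧
    -- Assumption 1 (B)
    (∀ u : X → ℝ, MemLp u (ENNReal.ofReal p) μ →
      (∃ n₀ : ℕ, energy μ p (fun x y => ENNReal.ofReal (ρt n₀ (dist x y))) u < ⊤) →
      ∀ R : ℝ, 0 < R →
        Tendsto (fun n => ∫⁻ x, ∫⁻ y in {y | 0 < dist x y ∧ dist x y < R},
            ENNReal.ofReal (|u x - u y| ^ p) * ENNReal.ofReal (ρt n (dist x y)) ∂μ ∂μ)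
          atTop (nhds 0)) ∧
    -- Assumption 1 (C)
    (∀ᶠ R : ℝ in atTop, ∃ C : ℝ≥0∞, C < ⊤ ∧
      ∀ (x : X) (n : ℕ),
        ∫⁻ y in {y | R ≤ dist x y}, ENNReal.ofReal (ρt n (dist x y)) ∂μ ≤ C) := by
  obtain ⟨R₁, hvol⟩ := hvol
  -- basic facts
  have hgpos : ∀ n, ∀ r > (0:ℝ), 0 < ρt n r := fun n => aux_pos (hρ_nonneg n) (hρ_anti n)
  have hgd0 : ∀ n, ∀ r > (0:ℝ), deriv (ρt n) r ≤ 0 := fun n r hr =>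
    aux_deriv_nonpos (hρ_C1 n) (hρ_anti n) hr
  have hg0 : ∀ n, Tendsto (ρt n) atTop (nhds 0) := fun n =>
    aux_g_tendsto_zero (hρ_nonneg n) (hρ_V n) hVtop
  have hVpos : ∀ r > (0:ℝ), 0 < V r := fun r hr => aux_V_pos hV0 hVmono hr
  set T : ℕ → X → ℝ → ℝ≥0∞ := fun n x R =>
    ∫⁻ y in {y | R ≤ dist x y}, ENNReal.ofReal (ρt n (dist x y)) ∂μ with hTdef
  -- integrable regime
  have hhalf : ∀ᶠ R in atTop, 1/2 < I R := hI_one.eventually (eventually_gt_nhds (by norm_num))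
  obtain ⟨Rs, hRsI, hRs1⟩ := (hhalf.and (eventually_ge_atTop 1)).exists
  have hRs0 : (0:ℝ) < Rs := lt_of_lt_of_le one_pos hRs1
  obtain ⟨N, hN⟩ := eventually_atTop.1
    ((hI Rs hRs0).eventually (eventually_gt_nhds (by linarith : (1/4:ℝ) < I Rs)))
  have hIntOn : ∀ n, N ≤ n → ∀ R, Rs ≤ R →
      IntegrableOn (fun r => deriv V r * ρt n r) (Set.Ioi R) volume := by
    intro n hn R hR
    have h1 : IntegrableOn (fun r => deriv V r * ρt n r) (Set.Ioi Rs) volume := by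
      by_contra hcon
      have h2 := hN n hn
      rw [MeasureTheory.integral_undef hcon] at h2
      linarith
    exact h1.mono_set (Set.Ioi_subset_Ioi hR)
  have hJeq : ∀ n, N ≤ n → ∀ R, Rs ≤ R →
      (∫⁻ r in Set.Ioi R, ENNReal.ofReal (deriv V r * ρt n r))
        = ENNReal.ofReal (∫ r in Set.Ioi R, deriv V r * ρt n r) := by
    intro n hn R hR
    have hR0 : (0:ℝ) < R := lt_of_lt_of_le hRs0 hR
    rw [ofReal_integral_eq_lintegral_ofReal (hIntOn n hn R hR)
      ((ae_restrict_iff' measurableSet_Ioi).2 (ae_of_all _ fun r hr => ?_))]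
    have hr0 : 0 < r := lt_trans hR0 hr
    exact mul_nonneg (aux_V_deriv_nonneg hVC1 hVmono hr0) (hρ_nonneg n r hr0)
  -- ratio domination on tails
  have hratio_tail : ∀ m n : ℕ, m < n → ∀ R, 0 < R → ∀ d, R ≤ d →
      ρt m d ≤ (ρt m R / ρt n R) * ρt n d := by
    intro m n hmn R hR d hd
    have hd0 : 0 < d := lt_of_lt_of_le hR hd
    have h := hρ_ratio m n hmn (Set.mem_Ioi.2 hR) (Set.mem_Ioi.2 hd0) hd
    simp only at h
    rw [div_le_div_iff₀ (hgpos m R hR) (hgpos m d hd0)] at h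
    rw [div_mul_eq_mul_div, le_div_iff₀ (hgpos n R hR)]
    nlinarith
  -- ratio domination inside
  have hratio_in : ∀ m n : ℕ, m < n → ∀ R, 0 < R → ∀ d, 0 < d → d ≤ R →
      ρt n d ≤ (ρt n R / ρt m R) * ρt m d := by
    intro m n hmn R hR d hd0 hd
    have h := hρ_ratio m n hmn (Set.mem_Ioi.2 hd0) (Set.mem_Ioi.2 hR) hd
    simp only at h
    rw [div_le_div_iff₀ (hgpos m d hd0) (hgpos m R hR)] at h
    rw [div_mul_eq_mul_div, le_div_iff₀ (hgpos m R hR)]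
    nlinarith
  refine ⟨?_, ?_, ?_⟩
  · -- Part A
    intro x
    have hAVRle : AVR ≤ ENNReal.ofReal k := by
      refine le_of_tendsto (hAVR x) ?_
      filter_upwards [eventually_ge_atTop (max R₁ 1)] with r hr
      have hrR₁ : R₁ ≤ r := le_trans (le_max_left _ _) hr
      have hr1 : (1:ℝ) ≤ r := le_trans (le_max_right _ _) hr
      have hVr : 0 < V r := hVpos r (by linarith)
      calc μ (ball x r) / ENNReal.ofReal (V r)
          ≤ ENNReal.ofReal (k * V r) / ENNReal.ofReal (V r) :=
            ENNReal.div_le_div_right (hvol x r hrR₁) _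
        _ = ENNReal.ofReal k := by
            rw [ENNReal.ofReal_mul hk.le, mul_div_assoc,
              ENNReal.div_self (ENNReal.ofReal_pos.2 hVr).ne' ENNReal.ofReal_ne_top, mul_one]
    have hAVRtop : AVR ≠ ⊤ := (lt_of_le_of_lt hAVRle ENNReal.ofReal_lt_top).ne
    suffices H : ∀ ε : ℝ≥0∞, 0 < ε → ∀ᶠ R in atTop,
        AVR - ε ≤ liminf (fun n => T n x R) atTop ∧
          limsup (fun n => T n x R) atTop ≤ AVR + ε by
      constructor
      · rw [ENNReal.tendsto_nhds hAVRtop]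
        intro ε hε
        filter_upwards [H ε hε] with R hR
        exact Set.mem_Icc.2 ⟨le_trans hR.1 liminf_le_limsup, hR.2⟩
      · rw [ENNReal.tendsto_nhds hAVRtop]
        intro ε hε
        filter_upwards [H ε hε] with R hR
        exact Set.mem_Icc.2 ⟨hR.1, le_trans liminf_le_limsup hR.2⟩
    intro ε hε
    set e : ℝ≥0∞ := min ε 1 with hedef
    have he0 : 0 < e := lt_min hε one_pos
    have heT : e ≠ ⊤ := ne_top_of_le_ne_top ENNReal.one_ne_top (min_le_right _ _)
    have heε : e ≤ ε := min_le_left _ _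
    set δ : ℝ := e.toReal / (k + 3) with hδdef
    have hδ0 : 0 < δ := div_pos (ENNReal.toReal_pos he0.ne' heT) (by linarith)
    have heR1 : e.toReal ≤ 1 := by
      have h1 := ENNReal.toReal_mono ENNReal.one_ne_top (min_le_right ε 1)
      simpa using h1
    have hδ1 : δ ≤ 1 := by
      rw [hδdef, div_le_one (by linarith)]
      linarith
    have hkey : ENNReal.ofReal ((k + 2) * δ) ≤ ε := by
      refine le_trans (le_trans (ENNReal.ofReal_le_ofReal ?_)
        (le_of_eq (ENNReal.ofReal_toReal heT))) heε
      have ht : 0 ≤ e.toReal := ENNReal.toReal_nonneg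
      calc (k + 2) * δ = (k + 2) / (k + 3) * e.toReal := by rw [hδdef]; ring
        _ ≤ 1 * e.toReal := by
            refine mul_le_mul_of_nonneg_right ?_ ht
            rw [div_le_one (by linarith)]; linarith
        _ = e.toReal := one_mul _
    set d : ℝ≥0∞ := ENNReal.ofReal δ with hddef
    have hdT : d ≠ ⊤ := ENNReal.ofReal_ne_top
    have hd1 : d ≤ 1 := by
      rw [hddef, ← ENNReal.ofReal_one]
      exact ENNReal.ofReal_le_ofReal hδ1
    have hAd : AVR + d ≠ ⊤ := ENNReal.add_ne_top.2 ⟨hAVRtop, hdT⟩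
    have hAmd : AVR - d ≠ ⊤ := ne_top_of_le_ne_top hAVRtop tsub_le_self
    have hIcc := (ENNReal.tendsto_nhds hAVRtop).1 (hAVR x) d (ENNReal.ofReal_pos.2 hδ0)
    obtain ⟨Rδ, hRδ⟩ := eventually_atTop.1 hIcc
    have hIev : ∀ᶠ R in atTop, |I R - 1| < δ := by
      have h := Metric.tendsto_nhds.1 hI_one δ hδ0
      simpa [Real.dist_eq] using h
    obtain ⟨RI, hRI⟩ := eventually_atTop.1 hIev
    filter_upwards [eventually_ge_atTop R₁, eventually_ge_atTop 1, eventually_ge_atTop Rs,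
      eventually_ge_atTop Rδ, eventually_ge_atTop RI] with R hRR₁ hR1 hRRs hRRδ hRRI
    have hR0 : (0:ℝ) < R := lt_of_lt_of_le one_pos hR1
    have hIR : 1 - δ ≤ I R ∧ I R ≤ 1 + δ := by
      have h := abs_lt.1 (hRI R hRRI)
      constructor <;> linarith [h.1, h.2]
    have hup : ∀ r, R < r → μ (ball x r) ≤ (AVR + d) * ENNReal.ofReal (V r) := by
      intro r hr
      have h := (Set.mem_Icc.1 (hRδ r (le_of_lt (lt_of_le_of_lt hRRδ hr)))).2
      have hVr : 0 < V r := hVpos r (by linarith)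
      exact (ENNReal.div_le_iff_le_mul (Or.inl (ENNReal.ofReal_pos.2 hVr).ne')
        (Or.inl ENNReal.ofReal_ne_top)).1 h
    have hlo : ∀ r, R < r → (AVR - d) * ENNReal.ofReal (V r) ≤ μ (ball x r) := by
      intro r hr
      have h := (Set.mem_Icc.1 (hRδ r (le_of_lt (lt_of_le_of_lt hRRδ hr)))).1
      have hVr : 0 < V r := hVpos r (by linarith)
      rw [ENNReal.le_div_iff_mul_le (Or.inl (ENNReal.ofReal_pos.2 hVr).ne')
        (Or.inl ENNReal.ofReal_ne_top)] at h
      exact h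
    have hball_fin : μ (ball x R) ≠ ⊤ :=
      (lt_of_le_of_lt (hvol x R hRR₁) ENNReal.ofReal_lt_top).ne
    constructor
    · -- lower bound for liminf
      have hlo_n : ∀ n, N ≤ n →
          (AVR - d) * ENNReal.ofReal (∫ r in Set.Ioi R, deriv V r * ρt n r)
            - μ (ball x R) * ENNReal.ofReal (ρt n R) ≤ T n x R := by
        intro n hn
        rw [tsub_le_iff_right]
        have hibp := aux_ibp (hρ_C1 n) (hρ_nonneg n) (hgd0 n) hV0 hVmono hVC1 (hρ_V n) hR0
        calc (AVR - d) * ENNReal.ofReal (∫ r in Set.Ioi R, deriv V r * ρt n r)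
            = (AVR - d) * ∫⁻ r in Set.Ioi R, ENNReal.ofReal (deriv V r * ρt n r) := by
              rw [hJeq n hn R hRRs]
          _ ≤ (AVR - d) * ∫⁻ r in Set.Ioi R, ENNReal.ofReal (-deriv (ρt n) r * V r) := by
              refine mul_le_mul_right ?_ _
              rw [hibp]
              exact le_add_self
          _ = ∫⁻ r in Set.Ioi R, (AVR - d) * ENNReal.ofReal (-deriv (ρt n) r * V r) :=
              (lintegral_const_mul' _ _ hAmd).symm
          _ ≤ ∫⁻ r in Set.Ioi R, ENNReal.ofReal (-deriv (ρt n) r) * μ (ball x r) := by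
              refine lintegral_mono_ae ((ae_restrict_iff' measurableSet_Ioi).2 (ae_of_all _
                fun r hr => ?_))
              have hr0 : 0 < r := lt_trans hR0 hr
              rw [ENNReal.ofReal_mul (neg_nonneg.2 (hgd0 n r hr0)), mul_left_comm]
              exact mul_le_mul_right (hlo r hr) _
          _ ≤ T n x R + μ (ball x R) * ENNReal.ofReal (ρt n R) :=
              aux_lower μ (hρ_C1 n) (hgd0 n) (hg0 n) x hR0 hball_fin
      have hLtend : Tendsto (fun n =>
          (AVR - d) * ENNReal.ofReal (∫ r in Set.Ioi R, deriv V r * ρt n r)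
            - μ (ball x R) * ENNReal.ofReal (ρt n R)) atTop
          (nhds ((AVR - d) * ENNReal.ofReal (I R) - 0)) := by
        refine ENNReal.Tendsto.sub
          (ENNReal.Tendsto.const_mul (ENNReal.tendsto_ofReal (hI R hR0)) (Or.inr hAmd))
          ?_ (Or.inr (by simp))
        have h2 := ENNReal.tendsto_ofReal (hρ_lim R hR0)
        simp only [ENNReal.ofReal_zero] at h2
        have h3 := ENNReal.Tendsto.const_mul (a := μ (ball x R)) h2 (Or.inr hball_fin)
        simpa using h3
      have hliminf : (AVR - d) * ENNReal.ofReal (I R) ≤ liminf (fun n => T n x R) atTop := by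
        have h1 := liminf_le_liminf ((eventually_ge_atTop N).mono fun n hn => hlo_n n hn)
        rw [hLtend.liminf_eq, tsub_zero] at h1
        exact h1
      have hone : (1:ℝ≥0∞) - d ≤ ENNReal.ofReal (I R) := by
        rw [hddef, ← ENNReal.ofReal_one, ← ENNReal.ofReal_sub _ hδ0.le]
        exact ENNReal.ofReal_le_ofReal hIR.1
      have hstep : AVR * (1 - d) - d ≤ (AVR - d) * (1 - d) := by
        rw [tsub_le_iff_right]
        calc AVR * (1 - d) ≤ ((AVR - d) + d) * (1 - d) := mul_le_mul_left le_tsub_add _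
          _ = (AVR - d) * (1 - d) + d * (1 - d) := add_mul _ _ _
          _ ≤ (AVR - d) * (1 - d) + d := by
              refine add_le_add_right ?_ _
              calc d * (1 - d) ≤ d * 1 := mul_le_mul_right tsub_le_self d
                _ = d := mul_one d
      calc AVR - ε ≤ AVR - (AVR * d + d) := by
            refine tsub_le_tsub_left ?_ AVR
            calc AVR * d + d ≤ ENNReal.ofReal k * ENNReal.ofReal δ + ENNReal.ofReal δ :=
                  add_le_add (mul_le_mul' hAVRle le_rfl) le_rfl
              _ = ENNReal.ofReal (k * δ + δ) := by
                  rw [← ENNReal.ofReal_mul hk.le,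
                    ← ENNReal.ofReal_add (mul_nonneg hk.le hδ0.le) hδ0.le]
              _ ≤ ENNReal.ofReal ((k + 2) * δ) := ENNReal.ofReal_le_ofReal (by nlinarith)
              _ ≤ ε := hkey
        _ = AVR - AVR * d - d := (tsub_tsub _ _ _).symm
        _ ≤ AVR * (1 - d) - d := by
            refine tsub_le_tsub_right ?_ d
            rw [tsub_le_iff_right]
            calc AVR = AVR * ((1 - d) + d) := by rw [tsub_add_cancel_of_le hd1, mul_one]
              _ = AVR * (1 - d) + AVR * d := mul_add _ _ _
              _ ≤ AVR * (1 - d) + AVR * d := le_rfl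
        _ ≤ (AVR - d) * (1 - d) := hstep
        _ ≤ (AVR - d) * ENNReal.ofReal (I R) := mul_le_mul_right hone _
        _ ≤ liminf (fun n => T n x R) atTop := hliminf
    · -- upper bound for limsup
      have hup_n : ∀ n, N ≤ n → T n x R ≤ (AVR + d) * (ENNReal.ofReal (ρt n R * V R)
          + ENNReal.ofReal (∫ r in Set.Ioi R, deriv V r * ρt n r)) := by
        intro n hn
        have h1 := aux_upper μ (hρ_C1 n) (hρ_nonneg n) (hgd0 n) (hg0 n) hV0 hVmono hVC1
          (hρ_V n) x hR0 (AVR + d) hAd hup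
        rwa [hJeq n hn R hRRs] at h1
      have hUtend : Tendsto (fun n => (AVR + d) * (ENNReal.ofReal (ρt n R * V R)
          + ENNReal.ofReal (∫ r in Set.Ioi R, deriv V r * ρt n r))) atTop
          (nhds ((AVR + d) * (0 + ENNReal.ofReal (I R)))) := by
        refine ENNReal.Tendsto.const_mul
          (Tendsto.add ?_ (ENNReal.tendsto_ofReal (hI R hR0))) (Or.inr hAd)
        have h0' : Tendsto (fun n => ρt n R * V R) atTop (nhds 0) := by
          simpa using (hρ_lim R hR0).mul_const (V R)
        have h2 := ENNReal.tendsto_ofReal h0'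
        simpa using h2
      have hlimsup : limsup (fun n => T n x R) atTop ≤ (AVR + d) * ENNReal.ofReal (I R) := by
        have h1 := limsup_le_limsup ((eventually_ge_atTop N).mono fun n hn => hup_n n hn)
        rw [hUtend.limsup_eq] at h1
        simpa using h1
      have hIle : ENNReal.ofReal (I R) ≤ 1 + d := by
        rw [hddef, ← ENNReal.ofReal_one, ← ENNReal.ofReal_add zero_le_one hδ0.le]
        exact ENNReal.ofReal_le_ofReal hIR.2
      calc limsup (fun n => T n x R) atTop ≤ (AVR + d) * ENNReal.ofReal (I R) := hlimsup
        _ ≤ (AVR + d) * (1 + d) := mul_le_mul_right hIle _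
        _ = AVR + (AVR * d + (d + d * d)) := by ring
        _ ≤ AVR + ε := by
            refine add_le_add_right ?_ AVR
            calc AVR * d + (d + d * d)
                ≤ ENNReal.ofReal k * ENNReal.ofReal δ
                  + (ENNReal.ofReal δ + ENNReal.ofReal δ) := by
                  refine add_le_add (mul_le_mul' hAVRle le_rfl) (add_le_add le_rfl ?_)
                  calc d * d ≤ d * 1 := mul_le_mul_right hd1 d
                    _ = d := mul_one d
              _ = ENNReal.ofReal (k * δ + (δ + δ)) := by
                  rw [← ENNReal.ofReal_mul hk.le,
                    ← ENNReal.ofReal_add hδ0.le hδ0.le,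
                    ← ENNReal.ofReal_add (mul_nonneg hk.le hδ0.le) (by linarith)]
              _ = ENNReal.ofReal ((k + 2) * δ) := by ring_nf
              _ ≤ ε := hkey
  · -- Part B
    intro u _ hE R hR0
    obtain ⟨n₀, hEfin⟩ := hE
    have hup : ∀ᶠ n in atTop, (∫⁻ x, ∫⁻ y in {y | 0 < dist x y ∧ dist x y < R},
        ENNReal.ofReal (|u x - u y| ^ p) * ENNReal.ofReal (ρt n (dist x y)) ∂μ ∂μ)
        ≤ ENNReal.ofReal (ρt n R / ρt n₀ R)
            * energy μ p (fun x y => ENNReal.ofReal (ρt n₀ (dist x y))) u := by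
      filter_upwards [eventually_gt_atTop n₀] with n hn
      have hAmeas : ∀ x : X, MeasurableSet {y : X | 0 < dist x y ∧ dist x y < R} := by
        intro x
        refine MeasurableSet.inter ?_ ?_
        · exact (isOpen_lt continuous_const (continuous_const.dist continuous_id)).measurableSet
        · exact (isOpen_lt (continuous_const.dist continuous_id) continuous_const).measurableSet
      have hinner : ∀ x : X, (∫⁻ y in {y | 0 < dist x y ∧ dist x y < R},
          ENNReal.ofReal (|u x - u y| ^ p) * ENNReal.ofReal (ρt n (dist x y)) ∂μ)
          ≤ ENNReal.ofReal (ρt n R / ρt n₀ R) * ∫⁻ y in {y | y ≠ x},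
              ENNReal.ofReal (|u x - u y| ^ p) * ENNReal.ofReal (ρt n₀ (dist x y)) ∂μ := by
        intro x
        have step1 : (∫⁻ y in {y | 0 < dist x y ∧ dist x y < R},
            ENNReal.ofReal (|u x - u y| ^ p) * ENNReal.ofReal (ρt n (dist x y)) ∂μ)
            ≤ ∫⁻ y in {y | 0 < dist x y ∧ dist x y < R},
              ENNReal.ofReal (ρt n R / ρt n₀ R)
                * (ENNReal.ofReal (|u x - u y| ^ p) * ENNReal.ofReal (ρt n₀ (dist x y))) ∂μ := by
          refine lintegral_mono_ae ((ae_restrict_iff' (hAmeas x)).2 (ae_of_all _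
            fun y hy => ?_))
          rw [mul_left_comm]
          refine mul_le_mul_right ?_ _
          rw [← ENNReal.ofReal_mul (div_nonneg (hρ_nonneg n R hR0) (hgpos n₀ R hR0).le)]
          exact ENNReal.ofReal_le_ofReal (hratio_in n₀ n hn R hR0 _ hy.1 hy.2.le)
        rw [lintegral_const_mul' _ _ ENNReal.ofReal_ne_top] at step1
        refine le_trans step1 (mul_le_mul_right (lintegral_mono_set ?_) _)
        intro y hy
        exact fun hyx => (ne_of_gt hy.1) (by rw [hyx]; simp)
      calc (∫⁻ x, ∫⁻ y in {y | 0 < dist x y ∧ dist x y < R},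
            ENNReal.ofReal (|u x - u y| ^ p) * ENNReal.ofReal (ρt n (dist x y)) ∂μ ∂μ)
          ≤ ∫⁻ x, ENNReal.ofReal (ρt n R / ρt n₀ R) * ∫⁻ y in {y | y ≠ x},
              ENNReal.ofReal (|u x - u y| ^ p) * ENNReal.ofReal (ρt n₀ (dist x y)) ∂μ ∂μ :=
            lintegral_mono hinner
        _ = ENNReal.ofReal (ρt n R / ρt n₀ R)
              * energy μ p (fun x y => ENNReal.ofReal (ρt n₀ (dist x y))) u := by
            rw [lintegral_const_mul' _ _ ENNReal.ofReal_ne_top]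
            rfl
    have hupt : Tendsto (fun n => ENNReal.ofReal (ρt n R / ρt n₀ R)
        * energy μ p (fun x y => ENNReal.ofReal (ρt n₀ (dist x y))) u) atTop (nhds 0) := by
      have h1 : Tendsto (fun n => ρt n R / ρt n₀ R) atTop (nhds 0) := by
        simpa using (hρ_lim R hR0).div_const (ρt n₀ R)
      have h2 := ENNReal.tendsto_ofReal h1
      simp only [ENNReal.ofReal_zero] at h2
      have h3 := ENNReal.Tendsto.mul_const h2 (Or.inr hEfin.ne)
      simpa using h3
    exact tendsto_of_tendsto_of_tendsto_of_le_of_le' tendsto_const_nhds hupt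
      (Eventually.of_forall fun n => zero_le) hup
  · -- Part C
    filter_upwards [eventually_ge_atTop R₁, eventually_ge_atTop 1, eventually_ge_atTop Rs]
      with R hRR₁ hR1 hRRs
    have hR0 : (0:ℝ) < R := lt_of_lt_of_le one_pos hR1
    obtain ⟨Mgb, hMgb⟩ := (hρ_lim R hR0).bddAbove_range
    have hMg : ∀ n, ρt n R ≤ Mgb := fun n => hMgb (Set.mem_range_self n)
    obtain ⟨MJb, hMJb⟩ := (hI R hR0).bddAbove_range
    have hMJ : ∀ n, (∫ r in Set.Ioi R, deriv V r * ρt n r) ≤ MJb := fun n =>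
      hMJb (Set.mem_range_self n)
    have hC0 : ∀ n, N ≤ n → ∀ x : X, T n x R
        ≤ ENNReal.ofReal k * (ENNReal.ofReal (Mgb * V R) + ENNReal.ofReal MJb) := by
      intro n hn x
      have h1 := aux_upper μ (hρ_C1 n) (hρ_nonneg n) (hgd0 n) (hg0 n) hV0 hVmono hVC1
        (hρ_V n) x hR0 (ENNReal.ofReal k) ENNReal.ofReal_ne_top (fun r hr => by
          rw [← ENNReal.ofReal_mul hk.le]
          exact hvol x r (le_trans hRR₁ hr.le))
      refine le_trans h1 (mul_le_mul_right (add_le_add ?_ ?_) _)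
      · exact ENNReal.ofReal_le_ofReal
          (mul_le_mul_of_nonneg_right (hMg n) (hVpos R hR0).le)
      · rw [hJeq n hn R hRRs]
        exact ENNReal.ofReal_le_ofReal (hMJ n)
    set C₀ : ℝ≥0∞ := ENNReal.ofReal k * (ENNReal.ofReal (Mgb * V R) + ENNReal.ofReal MJb)
      with hC₀def
    set Cs : ℝ≥0∞ := ∑ m ∈ Finset.range N, ENNReal.ofReal (ρt m R / ρt N R) with hCsdef
    refine ⟨C₀ * (1 + Cs), ?_, ?_⟩
    · refine ENNReal.mul_lt_top ?_ ?_
      · exact ENNReal.mul_lt_top ENNReal.ofReal_lt_top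
          (ENNReal.add_lt_top.2 ⟨ENNReal.ofReal_lt_top, ENNReal.ofReal_lt_top⟩)
      · refine ENNReal.add_lt_top.2 ⟨ENNReal.one_lt_top, ?_⟩
        exact ENNReal.sum_lt_top.2 fun m _ => ENNReal.ofReal_lt_top
    · intro x n
      rcases le_or_gt N n with hn | hn
      · refine le_trans (hC0 n hn x) ?_
        calc C₀ = C₀ * 1 := (mul_one _).symm
          _ ≤ C₀ * (1 + Cs) := mul_le_mul_right le_self_add _
      · have hdom := aux_dom μ (div_nonneg (hρ_nonneg n R hR0) (hgpos N R hR0).le) x R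
          (hratio_tail n N hn R hR0)
        refine le_trans hdom ?_
        have hmem : ENNReal.ofReal (ρt n R / ρt N R) ≤ Cs := by
          rw [hCsdef]
          exact Finset.single_le_sum (f := fun m => ENNReal.ofReal (ρt m R / ρt N R))
            (fun i _ => zero_le) (Finset.mem_range.2 hn)
        calc ENNReal.ofReal (ρt n R / ρt N R) * T N x R
            ≤ Cs * C₀ := mul_le_mul' hmem (hC0 N le_rfl x)
          _ ≤ C₀ * (1 + Cs) := by rw [mul_comm]; exact mul_le_mul_right le_add_self _
end IBP
end

section
/- Let (X,d,m) be a metric measure space admitting the generalized asymptotic volume ratio AVR^V associated to V, and suppose there exists k > 0 such that m(B_r(x)) ≤ k V(r) for every x ∈ X and every sufficiently large r > 0. Let (ρ_n)_{n∈ℕ} be mollifiers of radial type satisfying the approximation of the identity associated to V (Condition 3). Then for every x ∈ X, lim_{R→∞} limsup_{n→∞} ∫_{{y : d(x,y) ≥ R}} ρ_n(x,y) dm(y) = lim_{R→∞} liminf_{n→∞} ∫_{{y : d(x,y) ≥ R}} ρ_n(x,y) dm(y) = AVR^V. -/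
open MeasureTheory Filter Topology Metric Set ENNReal

private lemma measurable_ext_Ioi {f : ℝ → ℝ} (hf : ContinuousOn f (Set.Ioi 0)) :
    Measurable (fun r : ℝ => if 0 < r then f r else 0) := by
  have h : (fun r : ℝ => if 0 < r then f r else 0)
      = (Set.Ioi (0:ℝ)).piecewise f (fun _ => 0) := by
    ext r; by_cases h : (0:ℝ) < r <;> simp [Set.piecewise, h, Set.mem_Ioi]
  rw [h]
  exact hf.measurable_piecewise continuousOn_const measurableSet_Ioi

private lemma contOn_derivV {V : ℝ → ℝ} (hVC1 : ContDiffOn ℝ 1 V (Set.Ici 0)) :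
    ContinuousOn (deriv V) (Set.Ioi 0) := by
  have h1 : ContinuousOn (derivWithin V (Set.Ici 0)) (Set.Ici 0) :=
    hVC1.continuousOn_derivWithin (uniqueDiffOn_Ici 0) le_rfl
  refine (h1.mono Set.Ioi_subset_Ici_self).congr ?_
  intro r hr
  exact (derivWithin_of_mem_nhds (Ici_mem_nhds hr)).symm

private lemma hasDerivAtV {V : ℝ → ℝ} (hVC1 : ContDiffOn ℝ 1 V (Set.Ici 0))
    {r : ℝ} (hr : 0 < r) : HasDerivAt V (deriv V r) r :=
  ((hVC1.contDiffAt (Ici_mem_nhds hr)).differentiableAt one_ne_zero).hasDerivAt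

private lemma derivV_nonneg {V : ℝ → ℝ} (hVmono : StrictMonoOn V (Set.Ici 0))
    (hVC1 : ContDiffOn ℝ 1 V (Set.Ici 0)) {r : ℝ} (hr : 0 < r) : 0 ≤ deriv V r := by
  have hd := hasDerivAtV hVC1 hr
  have hs := hasDerivAt_iff_tendsto_slope.mp hd
  have hs' : Tendsto (slope V r) (𝓝[>] r) (𝓝 (deriv V r)) :=
    hs.mono_left (nhdsWithin_mono _ (fun y hy => hy.ne'))
  refine ge_of_tendsto hs' ?_
  filter_upwards [self_mem_nhdsWithin] with s hs2
  have hrs : r < s := hs2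
  have hVle : V r ≤ V s :=
    (hVmono.monotoneOn) (le_of_lt hr) (by simp only [Set.mem_Ici]; linarith) hrs.le
  rw [slope_def_field]
  apply div_nonneg <;> linarith

private lemma lint_derivV {V : ℝ → ℝ} (hVmono : StrictMonoOn V (Set.Ici 0))
    (hVC1 : ContDiffOn ℝ 1 V (Set.Ici 0)) {a b : ℝ} (ha : 0 < a) (hab : a ≤ b) :
    ∫⁻ r in Set.Ioc a b, ENNReal.ofReal (deriv V r) = ENNReal.ofReal (V b - V a) := by
  have hcont := contOn_derivV hVC1
  have hsub : Set.Icc a b ⊆ Set.Ioi 0 := fun r hr => lt_of_lt_of_le ha hr.1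
  have hci : ContinuousOn (deriv V) (Set.Icc a b) := hcont.mono hsub
  have hint : IntegrableOn (deriv V) (Set.Ioc a b) :=
    (hci.integrableOn_Icc).mono_set Set.Ioc_subset_Icc_self
  have hftc : ∫ r in a..b, deriv V r = V b - V a := by
    apply intervalIntegral.integral_eq_sub_of_hasDerivAt
    · intro r hr
      rw [Set.uIcc_of_le hab] at hr
      exact hasDerivAtV hVC1 (hsub hr)
    · exact hci.intervalIntegrable_of_Icc hab
  rw [← ofReal_integral_eq_lintegral_ofReal hint ?_]
  · congr 1
    rw [← hftc, intervalIntegral.integral_of_le hab]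
  · refine (ae_restrict_iff' measurableSet_Ioc).2 (ae_of_all _ fun r hr => ?_)
    exact derivV_nonneg hVmono hVC1 (lt_of_lt_of_le ha hr.1.le)

private lemma core_estimate
    {X : Type*} [MetricSpace X] [MeasurableSpace X] [BorelSpace X]
    (μ : Measure X) (x : X)
    (V : ℝ → ℝ) (hV0 : 0 ≤ V 0) (hVmono : StrictMonoOn V (Set.Ici 0))
    (hVC1 : ContDiffOn ℝ 1 V (Set.Ici 0))
    (g : ℝ → ℝ)
    (hg_nonneg : ∀ r > (0:ℝ), 0 ≤ g r)
    (hg_anti : StrictAntiOn g (Set.Ioi 0))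
    (hg_cont : ContinuousOn g (Set.Ioi 0))
    (hg_top : Tendsto g atTop (𝓝 0))
    (a b : ℝ≥0∞) (ha_ne : a ≠ ∞) (hb_ne : b ≠ ∞)
    (R : ℝ) (hR : 1 ≤ R)
    (hlow : ∀ s, R ≤ s → a * ENNReal.ofReal (V s) ≤ μ (ball x s))
    (hup : ∀ s, R ≤ s → μ (ball x s) ≤ b * ENNReal.ofReal (V s)) :
    (∫⁻ y in {y | R ≤ dist x y}, ENNReal.ofReal (g (dist x y)) ∂μ)
        + a * (ENNReal.ofReal (V R) * ENNReal.ofReal (g R))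
      ≤ b * ((∫⁻ r in Set.Ioi R, ENNReal.ofReal (deriv V r * g r))
        + ENNReal.ofReal (V R) * ENNReal.ofReal (g R))
    ∧ a * ((∫⁻ r in Set.Ioi R, ENNReal.ofReal (deriv V r * g r))
        + ENNReal.ofReal (V R) * ENNReal.ofReal (g R))
      ≤ (∫⁻ y in {y | R ≤ dist x y}, ENNReal.ofReal (g (dist x y)) ∂μ)
        + b * (ENNReal.ofReal (V R) * ENNReal.ofReal (g R)) := by
  have hRpos : (0:ℝ) < R := by linarith
  have hVmonoOn := hVmono.monotoneOn
  have hVnonneg : ∀ r : ℝ, 0 ≤ r → 0 ≤ V r := fun r hr =>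
    hV0.trans (hVmonoOn Set.self_mem_Ici hr hr)
  set S : Set X := {y | R ≤ dist x y} with hS
  have hSmeas : MeasurableSet S := by
    have : S = (fun y => dist x y) ⁻¹' (Set.Ici R) := rfl
    rw [this]
    exact (continuous_const.dist continuous_id).measurable measurableSet_Ici
  set Gg : ℝ → ℝ := fun r => if 0 < r then g r else 0 with hGg
  have hGgm : Measurable Gg := measurable_ext_Ioi hg_cont
  have hGg_nonneg : ∀ r, 0 ≤ Gg r := by
    intro r; by_cases h : (0:ℝ) < r <;> simp [hGg, h]
    exact hg_nonneg r h
  set γ : ℝ := g R with hγ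
  have hγpos : 0 < γ := by
    rcases lt_or_eq_of_le (hg_nonneg R hRpos) with h | h
    · exact h
    · exfalso
      have h2 := hg_anti (Set.mem_Ioi.2 hRpos) (Set.mem_Ioi.2 (by linarith : (0:ℝ) < R + 1))
        (by linarith)
      have h3 := hg_nonneg (R+1) (by linarith)
      rw [← h] at h2; linarith
  set cV : ℝ≥0∞ := ENNReal.ofReal (V R) with hcV
  have hcV_ne : cV ≠ ∞ := ofReal_ne_top
  set χ : ℝ → ℝ≥0∞ := (Set.Ioc (0:ℝ) γ).indicator (fun _ => (1:ℝ≥0∞)) with hχdef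
  set SL : ℝ → Set X := fun t => {y | t ≤ Gg (dist x y)} with hSL
  set W : ℝ → ℝ≥0∞ :=
    fun t => ∫⁻ r in Set.Ioi R, ENNReal.ofReal (deriv V r) * (if t ≤ Gg r then 1 else 0)
    with hW
  -- E1 : layer cake for the metric side
  have E1 : (∫⁻ y in S, ENNReal.ofReal (g (dist x y)) ∂μ)
      = ∫⁻ t in Set.Ioi 0, μ.restrict S (SL t) := by
    have h1 : (∫⁻ y in S, ENNReal.ofReal (g (dist x y)) ∂μ)
        = ∫⁻ y in S, ENNReal.ofReal (Gg (dist x y)) ∂μ := by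
      refine setLIntegral_congr_fun hSmeas (fun y hy => ?_)
      have : (0:ℝ) < dist x y := lt_of_lt_of_le hRpos hy
      simp [hGg, this]
    rw [h1]
    exact lintegral_eq_lintegral_meas_le (μ.restrict S)
      (ae_of_all _ fun y => hGg_nonneg _)
      (Measurable.aemeasurable (hGgm.comp (continuous_const.dist continuous_id).measurable))
  -- E2 : layer cake for the 1D side, via Tonelli
  have E2 : (∫⁻ t in Set.Ioi 0, W t)
      = ∫⁻ r in Set.Ioi R, ENNReal.ofReal (deriv V r * g r) := by
    have hFm : AEMeasurable (Function.uncurry fun t r =>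
        ENNReal.ofReal (deriv V r) * (if t ≤ Gg r then 1 else 0))
        ((volume.restrict (Set.Ioi (0:ℝ))).prod (volume.restrict (Set.Ioi R))) := by
      refine Measurable.aemeasurable ?_
      have h1 : Measurable fun p : ℝ × ℝ => ENNReal.ofReal (deriv V p.2) :=
        ((measurable_deriv V).comp measurable_snd).ennreal_ofReal
      have h2 : MeasurableSet {p : ℝ × ℝ | p.1 ≤ Gg p.2} :=
        measurableSet_le measurable_fst (hGgm.comp measurable_snd)
      exact h1.mul (Measurable.ite h2 measurable_const measurable_const)
    calc (∫⁻ t in Set.Ioi 0, W t)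
        = ∫⁻ r in Set.Ioi R, ∫⁻ t in Set.Ioi 0,
            ENNReal.ofReal (deriv V r) * (if t ≤ Gg r then 1 else 0) :=
          lintegral_lintegral_swap hFm
      _ = ∫⁻ r in Set.Ioi R, ENNReal.ofReal (deriv V r * g r) := by
          refine setLIntegral_congr_fun measurableSet_Ioi (fun r hr => ?_)
          have hr0 : (0:ℝ) < r := lt_trans hRpos hr
          rw [lintegral_const_mul' _ _ ofReal_ne_top]
          have hiteq : (fun t : ℝ => if t ≤ Gg r then (1:ℝ≥0∞) else 0)
              = (Set.Iic (Gg r)).indicator (fun _ => (1:ℝ≥0∞)) := by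
            ext t; by_cases h : t ≤ Gg r <;> simp [Set.indicator, Set.mem_Iic, h]
          rw [hiteq, lintegral_indicator measurableSet_Iic, setLIntegral_one,
            Measure.restrict_apply measurableSet_Iic]
          have : Set.Iic (Gg r) ∩ Set.Ioi (0:ℝ) = Set.Ioc 0 (Gg r) := Set.Iic_inter_Ioi
          rw [this, Real.volume_Ioc, sub_zero]
          have : Gg r = g r := by simp [hGg, hr0]
          rw [this, ← ENNReal.ofReal_mul (derivV_nonneg hVmono hVC1 hr0)]
  -- pointwise estimates
  have PW : ∀ t ∈ Set.Ioi (0:ℝ),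
      (μ.restrict S (SL t) + (a * cV) * χ t ≤ b * (W t + cV * χ t)
        ∧ a * (W t + cV * χ t) ≤ μ.restrict S (SL t) + (b * cV) * χ t) := by
    intro t ht
    have ht0 : (0:ℝ) < t := ht
    have hrs : μ.restrict S (SL t) = μ (SL t ∩ S) := Measure.restrict_apply' hSmeas
    by_cases hcase : t ≤ γ
    · have hχ1 : χ t = 1 := by simp [hχdef, Set.indicator_apply, Set.mem_Ioc, ht0, hcase]
      -- find s with g s = t, R ≤ s
      obtain ⟨s, hs_ge, hgs⟩ : ∃ s, R ≤ s ∧ g s = t := by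
        rcases eq_or_lt_of_le hcase with heq | hlt
        · exact ⟨R, le_rfl, heq.symm⟩
        · have hev : ∀ᶠ r in atTop, g r < t := hg_top.eventually (Iio_mem_nhds ht0)
          obtain ⟨M, hM1, hM2⟩ := ((eventually_ge_atTop (R+1)).and hev).exists
          have hRM : R ≤ M := by linarith
          have hcont : ContinuousOn g (Set.Icc R M) :=
            hg_cont.mono (fun r hr => lt_of_lt_of_le hRpos hr.1)
          have hIVT := intermediate_value_Icc' hRM hcont
          have hmem : t ∈ Set.Icc (g M) (g R) := ⟨hM2.le, hcase⟩
          obtain ⟨s, hsmem, hgs⟩ := hIVT hmem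
          exact ⟨s, hsmem.1, hgs⟩
      have hs_pos : (0:ℝ) < s := lt_of_lt_of_le hRpos hs_ge
      have hs_nonneg : (0:ℝ) ≤ s := hs_pos.le
      have hiff : ∀ d : ℝ, 0 < d → (t ≤ Gg d ↔ d ≤ s) := by
        intro d hd
        have hGgd : Gg d = g d := by simp [hGg, hd]
        rw [hGgd]
        constructor
        · intro h
          by_contra hds
          push_neg at hds
          have h2 := hg_anti (Set.mem_Ioi.2 hs_pos) (Set.mem_Ioi.2 hd) hds
          rw [hgs] at h2; linarith
        · intro h
          have h2 := hg_anti.antitoneOn (Set.mem_Ioi.2 hd) (Set.mem_Ioi.2 hs_pos) h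
          rw [hgs] at h2; linarith
      have hSLS : SL t ∩ S = {y | R ≤ dist x y ∧ dist x y ≤ s} := by
        ext y
        simp only [hSL, hS, Set.mem_inter_iff, Set.mem_setOf_eq]
        constructor
        · rintro ⟨h1, h2⟩
          exact ⟨h2, (hiff _ (lt_of_lt_of_le hRpos h2)).1 h1⟩
        · rintro ⟨h1, h2⟩
          exact ⟨(hiff _ (lt_of_lt_of_le hRpos h1)).2 h2, h1⟩
      have hWt : W t = ENNReal.ofReal (V s - V R) := by
        have h1 : W t = ∫⁻ r in Set.Ioi R,
            (Set.Ioc R s).indicator (fun r => ENNReal.ofReal (deriv V r)) r := by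
          refine setLIntegral_congr_fun measurableSet_Ioi (fun r hr => ?_)
          have hr0 : (0:ℝ) < r := lt_trans hRpos hr
          by_cases hrs' : r ≤ s
          · rw [if_pos ((hiff r hr0).2 hrs'), Set.indicator_of_mem (Set.mem_Ioc.2 ⟨hr, hrs'⟩), mul_one]
          · rw [if_neg (fun hc => hrs' ((hiff r hr0).1 hc)),
              Set.indicator_of_notMem (fun hc => hrs' hc.2), mul_zero]
        rw [h1, lintegral_indicator measurableSet_Ioc,
          Measure.restrict_restrict measurableSet_Ioc,
          Set.inter_eq_self_of_subset_left Set.Ioc_subset_Ioi_self]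
        exact lint_derivV hVmono hVC1 hRpos hs_ge
      have hVRs : V R ≤ V s := hVmonoOn (by simp only [Set.mem_Ici]; linarith)
        (Set.mem_Ici.2 hs_nonneg) hs_ge
      have hsplit : ENNReal.ofReal (V s) = ENNReal.ofReal (V s - V R) + cV := by
        rw [hcV, ← ENNReal.ofReal_add (by linarith) (hVnonneg R (by linarith))]
        ring_nf
      constructor
      · -- upper
        have hsub1 : ∀ s' : ℝ, s < s' → μ (SL t ∩ S) + a * cV ≤ b * ENNReal.ofReal (V s') := by
          intro s' hs'
          have hunion : (SL t ∩ S) ∪ ball x R ⊆ ball x s' := by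
            rintro y (hy | hy)
            · rw [hSLS] at hy
              exact mem_ball'.2 (lt_of_le_of_lt hy.2 hs')
            · exact ball_subset_ball (by linarith) hy
          have hdisj : Disjoint (SL t ∩ S) (ball x R) := by
            rw [hSLS, Set.disjoint_left]
            intro y hy hy2
            exact absurd hy.1 (not_le.2 (mem_ball'.1 hy2))
          calc μ (SL t ∩ S) + a * cV
              ≤ μ (SL t ∩ S) + μ (ball x R) := add_le_add_right (hlow R le_rfl) _
            _ = μ ((SL t ∩ S) ∪ ball x R) := (measure_union hdisj measurableSet_ball).symm
            _ ≤ μ (ball x s') := measure_mono hunion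
            _ ≤ b * ENNReal.ofReal (V s') := hup s' (by linarith)
        have hlim : Tendsto (fun s' => b * ENNReal.ofReal (V s')) (𝓝[>] s)
            (𝓝 (b * ENNReal.ofReal (V s))) := by
          have hcVs : ContinuousAt V s :=
            hVC1.continuousOn.continuousAt (Ici_mem_nhds hs_pos)
          have h2 : Tendsto (fun s' => ENNReal.ofReal (V s')) (𝓝[>] s)
              (𝓝 (ENNReal.ofReal (V s))) :=
            ((ENNReal.continuous_ofReal.continuousAt.comp hcVs).tendsto).mono_left
              nhdsWithin_le_nhds
          exact ENNReal.Tendsto.const_mul h2 (Or.inr hb_ne)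
        have hu1 : μ (SL t ∩ S) + a * cV ≤ b * ENNReal.ofReal (V s) :=
          ge_of_tendsto hlim
            (eventually_mem_nhdsWithin.mono fun s' hs' => hsub1 s' hs')
        rw [hsplit] at hu1
        rw [hrs, hχ1, hWt]
        simpa using hu1
      · -- lower
        rw [hrs, hχ1, hWt]
        have hkey : a * ENNReal.ofReal (V s) ≤ μ (SL t ∩ S) + b * cV := by
          calc a * ENNReal.ofReal (V s) ≤ μ (ball x s) := hlow s hs_ge
            _ ≤ μ ((SL t ∩ S) ∪ ball x R) := by
                refine measure_mono fun y hy => ?_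
                have hd : dist x y < s := mem_ball'.1 hy
                by_cases hRy : R ≤ dist x y
                · exact Or.inl (hSLS ▸ ⟨hRy, hd.le⟩)
                · exact Or.inr (mem_ball'.2 (not_le.1 hRy))
            _ ≤ μ (SL t ∩ S) + μ (ball x R) := measure_union_le _ _
            _ ≤ μ (SL t ∩ S) + b * cV := add_le_add_right (hup R le_rfl) _
        rw [hsplit] at hkey
        simpa using hkey
    · -- t > γ
      push_neg at hcase
      have hχ0 : χ t = 0 := by
        simp [hχdef, Set.indicator_apply, Set.mem_Ioc, not_le.2 hcase]
      have hSL0 : SL t ∩ S = ∅ := by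
        ext y
        simp only [hSL, hS, Set.mem_inter_iff, Set.mem_setOf_eq, Set.mem_empty_iff_false,
          iff_false, not_and]
        intro h1 h2
        have hd0 : (0:ℝ) < dist x y := lt_of_lt_of_le hRpos h2
        have hGgd : Gg (dist x y) = g (dist x y) := by simp [hGg, hd0]
        rw [hGgd] at h1
        have : g (dist x y) ≤ g R := by
          rcases eq_or_lt_of_le h2 with heq | hlt
          · rw [← heq]
          · exact (hg_anti (Set.mem_Ioi.2 hRpos) (Set.mem_Ioi.2 hd0) hlt).le
        rw [hγ] at hcase; linarith
      have hW0 : W t = 0 := by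
        have hz : ∀ r ∈ Set.Ioi R,
            ENNReal.ofReal (deriv V r) * (if t ≤ Gg r then (1:ℝ≥0∞) else 0) = 0 := by
          intro r hr
          have hr0 : (0:ℝ) < r := lt_trans hRpos hr
          have hGgd : Gg r = g r := by simp [hGg, hr0]
          rw [if_neg, mul_zero]
          rw [hGgd]
          intro hc
          have : g r ≤ g R := by
            rcases eq_or_lt_of_le (le_of_lt (show R < r from hr)) with heq | hlt
            · rw [heq]
            · exact (hg_anti (Set.mem_Ioi.2 hRpos) (Set.mem_Ioi.2 hr0) hlt).le
          rw [hγ] at hcase; linarith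
        have h0 : (∫⁻ r in Set.Ioi R,
            ENNReal.ofReal (deriv V r) * (if t ≤ Gg r then (1:ℝ≥0∞) else 0))
            = ∫⁻ _ in Set.Ioi R, (0:ℝ≥0∞) :=
          setLIntegral_congr_fun measurableSet_Ioi hz
        exact h0.trans lintegral_zero
      rw [hrs, hSL0, measure_empty, hχ0, hW0]
      simp
  -- measurability of integrands in t
  have hmeasχ : Measurable χ := measurable_const.indicator measurableSet_Ioc
  have hmeasW : Measurable W := by
    apply Antitone.measurable
    intro t1 t2 h12
    refine lintegral_mono fun r => ?_
    refine mul_le_mul_right ?_ _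
    by_cases h : t2 ≤ Gg r
    · rw [if_pos h, if_pos (le_trans h12 h)]
    · rw [if_neg h]; exact zero_le
  have hintχ : (∫⁻ t in Set.Ioi 0, χ t) = ENNReal.ofReal γ := by
    rw [hχdef, lintegral_indicator measurableSet_Ioc, setLIntegral_one,
      Measure.restrict_apply measurableSet_Ioc]
    rw [Set.inter_eq_self_of_subset_left Set.Ioc_subset_Ioi_self, Real.volume_Ioc, sub_zero]
  -- put together : LHS integrals
  have hLHSeq : ∀ c : ℝ≥0∞, c ≠ ∞ →
      (∫⁻ t in Set.Ioi 0, (μ.restrict S (SL t) + (c * cV) * χ t))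
        = (∫⁻ y in S, ENNReal.ofReal (g (dist x y)) ∂μ) + c * (cV * ENNReal.ofReal γ) := by
    intro c hc
    rw [lintegral_add_right _ (hmeasχ.const_mul _), ← E1,
      lintegral_const_mul' _ _ (by exact ENNReal.mul_ne_top hc hcV_ne), hintχ, mul_assoc]
  have hRHSeq : ∀ c : ℝ≥0∞, c ≠ ∞ →
      (∫⁻ t in Set.Ioi 0, c * (W t + cV * χ t))
        = c * ((∫⁻ r in Set.Ioi R, ENNReal.ofReal (deriv V r * g r)) + cV * ENNReal.ofReal γ) := by
    intro c hc
    rw [lintegral_const_mul' _ _ hc,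
      lintegral_add_left hmeasW, E2,
      lintegral_const_mul' _ _ hcV_ne, hintχ]
  constructor
  · have h1 := hLHSeq a ha_ne
    have h2 := hRHSeq b hb_ne
    rw [← h1, ← h2]
    refine lintegral_mono_ae ((ae_restrict_iff' measurableSet_Ioi).2 (ae_of_all _ ?_))
    exact fun t ht => (PW t ht).1
  · have h1 := hLHSeq b hb_ne
    have h2 := hRHSeq a ha_ne
    rw [← h1, ← h2]
    refine lintegral_mono_ae ((ae_restrict_iff' measurableSet_Ioi).2 (ae_of_all _ ?_))
    exact fun t ht => (PW t ht).2


private lemma tendsto_of_bounds {L : ℝ → ℝ≥0∞} {I : ℝ → ℝ} {AVR : ℝ≥0∞}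
    (hAVR_ne : AVR ≠ ∞) (hI_one : Tendsto I atTop (𝓝 1))
    (h : ∀ ε : ℝ, 0 < ε → ∀ᶠ R in atTop,
       L R ≤ (AVR + ENNReal.ofReal ε) * ENNReal.ofReal (I R) ∧
       (AVR - ENNReal.ofReal ε) * ENNReal.ofReal (I R) ≤ L R) :
    Tendsto L atTop (𝓝 AVR) := by
  have hIlim : Tendsto (fun R => ENNReal.ofReal (I R)) atTop (𝓝 1) := by
    have := ENNReal.tendsto_ofReal hI_one
    simpa using this
  apply tendsto_of_le_liminf_of_limsup_le ?_ ?_ (isBoundedUnder_of ⟨⊤, fun _ => le_top⟩)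
    (isBoundedUnder_of ⟨0, fun _ => zero_le⟩)
  · -- AVR ≤ liminf L
    refine ENNReal.le_of_forall_pos_le_add fun δ hδ _ => ?_
    have hε : (0:ℝ) < (δ:ℝ) := hδ
    have hconv : Tendsto (fun R => (AVR - (δ:ℝ≥0∞)) * ENNReal.ofReal (I R)) atTop
        (𝓝 (AVR - (δ:ℝ≥0∞))) := by
      have h2 := ENNReal.Tendsto.const_mul hIlim
        (Or.inr (show AVR - (δ:ℝ≥0∞) ≠ ∞ from ne_top_of_le_ne_top hAVR_ne tsub_le_self))
      simpa using h2
    have h1 : AVR - (δ:ℝ≥0∞) ≤ liminf L atTop := by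
      rw [← hconv.liminf_eq]
      refine liminf_le_liminf ?_
      filter_upwards [h (δ:ℝ) hε] with R hR
      have := hR.2
      rwa [ENNReal.ofReal_coe_nnreal] at this
    calc AVR ≤ (AVR - (δ:ℝ≥0∞)) + δ := le_tsub_add
      _ ≤ liminf L atTop + δ := add_le_add_left h1 _
  · -- limsup L ≤ AVR
    refine ENNReal.le_of_forall_pos_le_add fun δ hδ _ => ?_
    have hε : (0:ℝ) < (δ:ℝ) := hδ
    have hconv : Tendsto (fun R => (AVR + (δ:ℝ≥0∞)) * ENNReal.ofReal (I R)) atTop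
        (𝓝 (AVR + (δ:ℝ≥0∞))) := by
      have h2 := ENNReal.Tendsto.const_mul hIlim
        (Or.inr (show AVR + (δ:ℝ≥0∞) ≠ ∞ from ENNReal.add_ne_top.2 ⟨hAVR_ne, coe_ne_top⟩))
      simpa using h2
    calc limsup L atTop ≤ limsup (fun R => (AVR + (δ:ℝ≥0∞)) * ENNReal.ofReal (I R)) atTop := by
          refine limsup_le_limsup ?_
          filter_upwards [h (δ:ℝ) hε] with R hR
          have := hR.1
          rwa [ENNReal.ofReal_coe_nnreal] at this
      _ = AVR + (δ:ℝ≥0∞) := hconv.limsup_eq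

/-- Part (A) of Lemma 2.11: under the volume growth assumptions and Condition 3, for every
`x ∈ X` the tail integrals of the radial mollifiers converge (in the iterated
`lim_{R→∞} limsup/liminf_{n→∞}` sense) to the generalized asymptotic volume ratio. -/
theorem radial_mollifiers_tail_integral_AVR
    {X : Type*} [MetricSpace X] [CompleteSpace X] [TopologicalSpace.SeparableSpace X]
    [MeasurableSpace X] [BorelSpace X]
    (μ : Measure X) [IsLocallyFiniteMeasure μ] [μ.IsOpenPosMeasure]
    -- `V` is a `C¹` strictly increasing function on `[0,∞)` with `V(t) → ∞`
    (V : ℝ → ℝ) (hV0 : 0 ≤ V 0) (hVmono : StrictMonoOn V (Set.Ici 0))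
    (hVC1 : ContDiffOn ℝ 1 V (Set.Ici 0)) (hVtop : Tendsto V atTop atTop)
    -- generalized asymptotic volume ratio associated to `V`
    (AVR : ℝ≥0∞)
    (hAVR : ∀ x₀ : X, Tendsto (fun r : ℝ => μ (ball x₀ r) / ENNReal.ofReal (V r))
      atTop (nhds AVR))
    -- volume upper bound `m(B_r(x)) ≤ k V(r)` for all large `r`
    (k : ℝ) (hk : 0 < k)
    (hvol : ∃ R₁ : ℝ, ∀ (x : X), ∀ r ≥ R₁, μ (ball x r) ≤ ENNReal.ofReal (k * V r))
    -- Condition 3: mollifiers of radial type, approximation of the identity associated to `V`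
    (ρt : ℕ → ℝ → ℝ)
    (hρ_nonneg : ∀ (n : ℕ), ∀ r > (0:ℝ), 0 ≤ ρt n r)
    (hρ_anti : ∀ n, StrictAntiOn (ρt n) (Set.Ioi 0))
    (hρ_C1 : ∀ n, ContDiffOn ℝ 1 (ρt n) (Set.Ioi 0))
    -- Condition 3 (A)
    (hρ_lim : ∀ r > (0:ℝ), Tendsto (fun n => ρt n r) atTop (nhds 0))
    (hρ_V : ∀ n, Tendsto (fun r => ρt n r * V r) atTop (nhds 0))
    -- Condition 3 (B)
    (hρ_ratio : ∀ i j : ℕ, i < j → MonotoneOn (fun r => ρt j r / ρt i r) (Set.Ioi 0))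
    -- Condition 3 (C): `lim_{R→∞} lim_{n→∞} ∫_R^∞ S(r) ρ̃_n(r) dr = 1`
    (I : ℝ → ℝ)
    (hI : ∀ R > (0:ℝ), Tendsto (fun n => ∫ r in Set.Ioi R, deriv V r * ρt n r) atTop (nhds (I R)))
    (hI_one : Tendsto I atTop (nhds 1)) :
    ∀ x : X,
      Tendsto (fun R : ℝ =>
          limsup (fun n =>
            ∫⁻ y in {y | R ≤ dist x y}, ENNReal.ofReal (ρt n (dist x y)) ∂μ) atTop)
        atTop (nhds AVR) ∧
      Tendsto (fun R : ℝ =>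
          liminf (fun n =>
            ∫⁻ y in {y | R ≤ dist x y}, ENNReal.ofReal (ρt n (dist x y)) ∂μ) atTop)
        atTop (nhds AVR) := by
  -- positivity of the mollifiers on `(0, ∞)`
  have hρ_pos : ∀ n, ∀ r > (0:ℝ), 0 < ρt n r := by
    intro n r hr
    rcases lt_or_eq_of_le (hρ_nonneg n r hr) with h | h
    · exact h
    · exfalso
      have h2 := hρ_anti n (Set.mem_Ioi.2 hr) (Set.mem_Ioi.2 (by linarith : (0:ℝ) < r + 1))
        (by linarith)
      have h3 := hρ_nonneg n (r+1) (by linarith)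
      rw [← h] at h2; linarith
  -- each mollifier tends to 0 at infinity
  have hρ_top : ∀ n, Tendsto (ρt n) atTop (𝓝 0) := by
    intro n
    have hev : ∀ᶠ r in atTop, ρt n r ≤ ρt n r * V r := by
      filter_upwards [hVtop.eventually_ge_atTop 1, eventually_gt_atTop 0] with r h1 h0
      nlinarith [hρ_nonneg n r h0]
    have hev0 : ∀ᶠ r in atTop, (0:ℝ) ≤ ρt n r := by
      filter_upwards [eventually_gt_atTop 0] with r h0
      exact hρ_nonneg n r h0
    exact tendsto_of_tendsto_of_tendsto_of_le_of_le' tendsto_const_nhds (hρ_V n) hev0 hev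
  obtain ⟨R₁, hR₁⟩ := hvol
  intro x
  have hAVRx := hAVR x
  -- AVR is finite
  have hAVR_ne_top : AVR ≠ ∞ := by
    have hub : ∀ᶠ r in atTop, μ (ball x r) / ENNReal.ofReal (V r) ≤ ENNReal.ofReal k := by
      filter_upwards [hVtop.eventually_ge_atTop 1, eventually_ge_atTop R₁] with r h1 hr
      have hb0 : ENNReal.ofReal (V r) ≠ 0 := by
        simp only [ne_eq, ENNReal.ofReal_eq_zero, not_le]; linarith
      rw [ENNReal.div_le_iff_le_mul (Or.inl hb0) (Or.inl ofReal_ne_top)]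
      calc μ (ball x r) ≤ ENNReal.ofReal (k * V r) := hR₁ x r hr
        _ = ENNReal.ofReal k * ENNReal.ofReal (V r) := ENNReal.ofReal_mul hk.le
    exact ne_top_of_le_ne_top ofReal_ne_top (le_of_tendsto hAVRx hub)
  -- dichotomy on integrability of `V' ρ_n`
  by_cases hint : ∀ (n : ℕ), ∀ R > (0:ℝ),
      IntegrableOn (fun r => deriv V r * ρt n r) (Set.Ioi R) volume
  swap
  · -- "bad" case : all tail integrals are eventually junk, contradicting Condition (C)
    exfalso
    push_neg at hint
    obtain ⟨m, R₀, hR₀pos, hbad⟩ := hint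
    have hfc : ∀ n, ContinuousOn (fun r => deriv V r * ρt n r) (Set.Ioi 0) :=
      fun n => (contOn_derivV hVC1).mul (hρ_C1 n).continuousOn
    have hbad' : ∀ n, m ≤ n → ∀ R > (0:ℝ),
        ¬ IntegrableOn (fun r => deriv V r * ρt n r) (Set.Ioi R) volume := by
      intro n hn R hRpos hcontra
      set R' : ℝ := max R R₀ with hR'
      have hR'R : R ≤ R' := le_max_left _ _
      have hR'R₀ : R₀ ≤ R' := le_max_right _ _
      have hR'pos : (0:ℝ) < R' := lt_of_lt_of_le hR₀pos hR'R₀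
      -- f_n integrable on Ioi R'
      have hn_int : IntegrableOn (fun r => deriv V r * ρt n r) (Set.Ioi R') volume :=
        hcontra.mono_set (Set.Ioi_subset_Ioi hR'R)
      -- f_m integrable on Ioi R'
      have hm_int : IntegrableOn (fun r => deriv V r * ρt m r) (Set.Ioi R') volume := by
        rcases eq_or_lt_of_le hn with heq | hlt
        · rw [heq]; exact hn_int
        · set c : ℝ := ρt n R' / ρt m R' with hc
          have hmpos := hρ_pos m R' hR'pos
          have hnpos := hρ_pos n R' hR'pos
          have hcpos : 0 < c := div_pos hnpos hmpos
          refine Integrable.mono' (hn_int.const_mul c⁻¹) ?_ ?_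
          · exact ((hfc m).mono (fun r (hr : r ∈ Set.Ioi R') =>
              Set.mem_Ioi.2 (lt_trans hR'pos hr))).aestronglyMeasurable measurableSet_Ioi
          · refine (ae_restrict_iff' measurableSet_Ioi).2 (ae_of_all _ fun r hr => ?_)
            have hr0 : (0:ℝ) < r := lt_trans hR'pos hr
            have hrpos := hρ_pos m r hr0
            have hratio := hρ_ratio m n hlt (Set.mem_Ioi.2 hR'pos) (Set.mem_Ioi.2 hr0)
              (le_of_lt hr)
            -- ρt n R' / ρt m R' ≤ ρt n r / ρt m r
            have hkey : ρt m r ≤ c⁻¹ * ρt n r := by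
              rw [hc]
              rw [div_le_div_iff₀ hmpos hrpos] at hratio
              rw [inv_div, div_mul_eq_mul_div, le_div_iff₀ hnpos]
              nlinarith
            have hVd := derivV_nonneg hVmono hVC1 hr0
            have h0m : 0 ≤ deriv V r * ρt m r := mul_nonneg hVd hrpos.le
            rw [Real.norm_eq_abs, abs_of_nonneg h0m]
            calc deriv V r * ρt m r ≤ deriv V r * (c⁻¹ * ρt n r) :=
                  mul_le_mul_of_nonneg_left hkey hVd
              _ = c⁻¹ * (deriv V r * ρt n r) := by ring
      -- f_m integrable on Icc R₀ R'
      have hcc : IntegrableOn (fun r => deriv V r * ρt m r) (Set.Icc R₀ R') volume :=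
        ((hfc m).mono (fun r hr => Set.mem_Ioi.2 (lt_of_lt_of_le hR₀pos hr.1))).integrableOn_Icc
      have : IntegrableOn (fun r => deriv V r * ρt m r) (Set.Ioi R₀) volume := by
        refine (hcc.union hm_int).mono_set fun r hr => ?_
        by_cases h : r ≤ R'
        · exact Or.inl ⟨(Set.mem_Ioi.1 hr).le, h⟩
        · exact Or.inr (Set.mem_Ioi.2 (not_le.1 h))
      exact hbad this
    have hI0 : ∀ R > (0:ℝ), I R = 0 := by
      intro R hRpos
      have hz : Tendsto (fun n => ∫ r in Set.Ioi R, deriv V r * ρt n r) atTop (𝓝 0) := by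
        have hev : ∀ᶠ n in atTop, (0:ℝ) = ∫ r in Set.Ioi R, deriv V r * ρt n r := by
          filter_upwards [eventually_ge_atTop m] with n hn
          exact (integral_undef (hbad' n hn R hRpos)).symm
        exact tendsto_const_nhds.congr' hev
      exact tendsto_nhds_unique (hI R hRpos) hz
    have hz2 : Tendsto I atTop (𝓝 (0:ℝ)) := by
      have hev : ∀ᶠ R in atTop, (0:ℝ) = I R := by
        filter_upwards [eventually_gt_atTop 0] with R h
        exact (hI0 R h).symm
      exact tendsto_const_nhds.congr' hev
    exact one_ne_zero (tendsto_nhds_unique hI_one hz2)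
  -- "good" case
  -- the central eventual bounds
  have H1 : ∀ ε : ℝ, 0 < ε → ∀ᶠ R in atTop,
      (limsup (fun n =>
          ∫⁻ y in {y | R ≤ dist x y}, ENNReal.ofReal (ρt n (dist x y)) ∂μ) atTop
        ≤ (AVR + ENNReal.ofReal ε) * ENNReal.ofReal (I R))
      ∧ ((AVR - ENNReal.ofReal ε) * ENNReal.ofReal (I R)
        ≤ liminf (fun n =>
          ∫⁻ y in {y | R ≤ dist x y}, ENNReal.ofReal (ρt n (dist x y)) ∂μ) atTop) := by
    intro ε hε
    set e := ENNReal.ofReal ε with he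
    have he_pos : 0 < e := ENNReal.ofReal_pos.2 hε
    have ha_ne : AVR - e ≠ ∞ := ne_top_of_le_ne_top hAVR_ne_top tsub_le_self
    have hb_ne : AVR + e ≠ ∞ := ENNReal.add_ne_top.2 ⟨hAVR_ne_top, ofReal_ne_top⟩
    have hIcc := (ENNReal.tendsto_nhds hAVR_ne_top).1 hAVRx e he_pos
    obtain ⟨r₀, hr₀⟩ := eventually_atTop.1 (hIcc.and (hVtop.eventually_ge_atTop 1))
    have hlow : ∀ s, r₀ ≤ s → (AVR - e) * ENNReal.ofReal (V s) ≤ μ (ball x s) := by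
      intro s hs
      obtain ⟨⟨h1, _⟩, hV1⟩ := hr₀ s hs
      have hne0 : ENNReal.ofReal (V s) ≠ 0 := by
        simp only [ne_eq, ENNReal.ofReal_eq_zero, not_le]; linarith
      calc (AVR - e) * ENNReal.ofReal (V s)
          ≤ (μ (ball x s) / ENNReal.ofReal (V s)) * ENNReal.ofReal (V s) :=
            mul_le_mul_left h1 _
        _ = μ (ball x s) := ENNReal.div_mul_cancel hne0 ofReal_ne_top
    have hup : ∀ s, r₀ ≤ s → μ (ball x s) ≤ (AVR + e) * ENNReal.ofReal (V s) := by
      intro s hs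
      obtain ⟨⟨_, h2⟩, hV1⟩ := hr₀ s hs
      have hne0 : ENNReal.ofReal (V s) ≠ 0 := by
        simp only [ne_eq, ENNReal.ofReal_eq_zero, not_le]; linarith
      calc μ (ball x s)
          = (μ (ball x s) / ENNReal.ofReal (V s)) * ENNReal.ofReal (V s) :=
            (ENNReal.div_mul_cancel hne0 ofReal_ne_top).symm
        _ ≤ (AVR + e) * ENNReal.ofReal (V s) := mul_le_mul_left h2 _
    filter_upwards [eventually_ge_atTop (max r₀ 1)] with R hRge
    have hR1 : 1 ≤ R := le_trans (le_max_right _ _) hRge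
    have hRr₀ : r₀ ≤ R := le_trans (le_max_left _ _) hRge
    have hRpos : (0:ℝ) < R := by linarith
    -- core estimates
    have hcore := fun n : ℕ => core_estimate μ x V hV0 hVmono hVC1 (ρt n)
      (hρ_nonneg n) (hρ_anti n) (hρ_C1 n).continuousOn (hρ_top n)
      (AVR - e) (AVR + e) ha_ne hb_ne R hR1
      (fun s hs => hlow s (le_trans hRr₀ hs)) (fun s hs => hup s (le_trans hRr₀ hs))
    set cV : ℝ≥0∞ := ENNReal.ofReal (V R) with hcVdef
    -- rewrite the lintegral over Ioi R as ofReal of the Bochner integral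
    have hJ : ∀ n : ℕ, (∫⁻ r in Set.Ioi R, ENNReal.ofReal (deriv V r * ρt n r))
        = ENNReal.ofReal (∫ r in Set.Ioi R, deriv V r * ρt n r) := by
      intro n
      rw [← ofReal_integral_eq_lintegral_ofReal (hint n R hRpos)
        ((ae_restrict_iff' measurableSet_Ioi).2 (ae_of_all _ fun r hr =>
          mul_nonneg (derivV_nonneg hVmono hVC1 (lt_trans hRpos hr))
            (hρ_nonneg n r (lt_trans hRpos hr))))]
    -- limits in n
    have hγ : Tendsto (fun n => ENNReal.ofReal (ρt n R)) atTop (𝓝 0) := by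
      have := ENNReal.tendsto_ofReal (hρ_lim R hRpos)
      simpa using this
    have hγc : Tendsto (fun n => cV * ENNReal.ofReal (ρt n R)) atTop (𝓝 0) := by
      have := ENNReal.Tendsto.const_mul (a := cV) hγ (Or.inr ofReal_ne_top)
      simpa using this
    have hJlim : Tendsto (fun n => ENNReal.ofReal (∫ r in Set.Ioi R, deriv V r * ρt n r))
        atTop (𝓝 (ENNReal.ofReal (I R))) := ENNReal.tendsto_ofReal (hI R hRpos)
    have hsum : Tendsto (fun n => ENNReal.ofReal (∫ r in Set.Ioi R, deriv V r * ρt n r)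
        + cV * ENNReal.ofReal (ρt n R)) atTop (𝓝 (ENNReal.ofReal (I R))) := by
      have := hJlim.add hγc
      simpa using this
    constructor
    · -- limsup bound
      have hub : ∀ n : ℕ, (∫⁻ y in {y | R ≤ dist x y}, ENNReal.ofReal (ρt n (dist x y)) ∂μ)
          ≤ (AVR + e) * (ENNReal.ofReal (∫ r in Set.Ioi R, deriv V r * ρt n r)
            + cV * ENNReal.ofReal (ρt n R)) := by
        intro n
        have h := (hcore n).1
        rw [hJ n] at h
        exact le_trans (le_add_right le_rfl) h
      have hconv : Tendsto (fun n => (AVR + e) *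
          (ENNReal.ofReal (∫ r in Set.Ioi R, deriv V r * ρt n r)
            + cV * ENNReal.ofReal (ρt n R))) atTop
          (𝓝 ((AVR + e) * ENNReal.ofReal (I R))) :=
        ENNReal.Tendsto.const_mul hsum (Or.inr hb_ne)
      calc limsup (fun n =>
            ∫⁻ y in {y | R ≤ dist x y}, ENNReal.ofReal (ρt n (dist x y)) ∂μ) atTop
          ≤ limsup (fun n => (AVR + e) *
            (ENNReal.ofReal (∫ r in Set.Ioi R, deriv V r * ρt n r)
              + cV * ENNReal.ofReal (ρt n R))) atTop :=
            limsup_le_limsup (Eventually.of_forall hub)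
        _ = (AVR + e) * ENNReal.ofReal (I R) := hconv.limsup_eq
    · -- liminf bound
      set L := liminf (fun n =>
        ∫⁻ y in {y | R ≤ dist x y}, ENNReal.ofReal (ρt n (dist x y)) ∂μ) atTop with hLdef
      have hlb : ∀ n : ℕ, (AVR - e) *
          (ENNReal.ofReal (∫ r in Set.Ioi R, deriv V r * ρt n r)
            + cV * ENNReal.ofReal (ρt n R))
          ≤ (∫⁻ y in {y | R ≤ dist x y}, ENNReal.ofReal (ρt n (dist x y)) ∂μ)
            + (AVR + e) * (cV * ENNReal.ofReal (ρt n R)) := by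
        intro n
        have h := (hcore n).2
        rw [hJ n] at h
        exact h
      have hLHS : Tendsto (fun n => (AVR - e) *
          (ENNReal.ofReal (∫ r in Set.Ioi R, deriv V r * ρt n r)
            + cV * ENNReal.ofReal (ρt n R))) atTop
          (𝓝 ((AVR - e) * ENNReal.ofReal (I R))) :=
        ENNReal.Tendsto.const_mul hsum (Or.inr ha_ne)
      refine ENNReal.le_of_forall_pos_le_add fun δ hδ _ => ?_
      have hδ' : (0:ℝ≥0∞) < (δ:ℝ≥0∞) := ENNReal.coe_pos.2 hδ
      have h0 : Tendsto (fun n => (AVR + e) * (cV * ENNReal.ofReal (ρt n R))) atTop (𝓝 0) := by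
        have := ENNReal.Tendsto.const_mul (a := AVR + e) hγc (Or.inr hb_ne)
        simpa using this
      have hsm : ∀ᶠ n in atTop, (AVR + e) * (cV * ENNReal.ofReal (ρt n R)) ≤ (δ:ℝ≥0∞) :=
        (ENNReal.tendsto_nhds_zero.1 h0) _ hδ'
      have hchain : ∀ᶠ n in atTop, (AVR - e) *
          (ENNReal.ofReal (∫ r in Set.Ioi R, deriv V r * ρt n r)
            + cV * ENNReal.ofReal (ρt n R))
          ≤ (∫⁻ y in {y | R ≤ dist x y}, ENNReal.ofReal (ρt n (dist x y)) ∂μ) + (δ:ℝ≥0∞) := by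
        filter_upwards [hsm] with n hn
        exact le_trans (hlb n) (add_le_add_right hn _)
      have h1 : (AVR - e) * ENNReal.ofReal (I R)
          = liminf (fun n => (AVR - e) *
            (ENNReal.ofReal (∫ r in Set.Ioi R, deriv V r * ρt n r)
              + cV * ENNReal.ofReal (ρt n R))) atTop := hLHS.liminf_eq.symm
      have h2 := liminf_le_liminf hchain
      have h3 : liminf (fun n =>
          (∫⁻ y in {y | R ≤ dist x y}, ENNReal.ofReal (ρt n (dist x y)) ∂μ) + (δ:ℝ≥0∞)) atTop
          = L + (δ:ℝ≥0∞) := by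
        have hmono : Monotone (fun z : ℝ≥0∞ => z + (δ:ℝ≥0∞)) :=
          fun _ _ h => add_le_add_left h _
        have hcontat : ContinuousAt (fun z : ℝ≥0∞ => z + (δ:ℝ≥0∞)) L :=
          (continuous_id.add continuous_const).continuousAt
        exact (hmono.map_liminf_of_continuousAt
          (fun n => ∫⁻ y in {y | R ≤ dist x y}, ENNReal.ofReal (ρt n (dist x y)) ∂μ)
          hcontat).symm
      rw [h1]
      exact le_trans h2 (le_of_eq h3)
  -- conclude
  constructor
  · refine tendsto_of_bounds hAVR_ne_top hI_one ?_
    intro ε hε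
    filter_upwards [H1 ε hε] with R hR
    refine ⟨hR.1, le_trans hR.2 ?_⟩
    exact liminf_le_limsup
  · refine tendsto_of_bounds hAVR_ne_top hI_one ?_
    intro ε hε
    filter_upwards [H1 ε hε] with R hR
    exact ⟨le_trans liminf_le_limsup hR.1, hR.2⟩
end

section
/- Let V : [0,∞) → [0,∞) be a C¹ strictly increasing function with V(t) → ∞ as t → ∞. Let (a_n)_{n∈ℕ} be a strictly decreasing sequence of positive reals converging to 0, and let f : (0,∞) → ℝ be a positive increasing C² function satisfying: (i) lim_{s→∞} f(s) = ∞; (ii) lim_{s→∞} s f'(s)/f(s)^r = 0 for every r > 1; (iii) s ↦ f'(s)/f(s)^r is strictly decreasing for every r > 1. Then the functions ρ̃_n(t) := a_n f'(V(t)) / f(V(t))^{a_n+1} on (0,∞) satisfy Condition 3 (approximation of the identity of radial type associated to V): each ρ̃_n is C¹ and strictly decreasing, lim_{n→∞} ρ̃_n(r) = 0 for every r > 0, lim_{r→∞} ρ̃_n(r) V(r) = 0 for every n, the map r ↦ ρ̃_n(r)/ρ̃_m(r) is non-decreasing whenever n > m, and lim_{R→∞} lim_{n→∞} ∫_R^∞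 V'(r) ρ̃_n(r) dr = 1. -/
open MeasureTheory Filter Topology Metric Set ENNReal

lemma aux_deriv_nonneg {g : ℝ → ℝ} {d t : ℝ} (ht : 0 < t)
    (hg : MonotoneOn g (Set.Ioi 0)) (hd : HasDerivAt g d t) : 0 ≤ d := by
  have h1 : HasDerivWithinAt g d (Set.Ioi t) t := hd.hasDerivWithinAt
  rw [hasDerivWithinAt_iff_tendsto_slope] at h1
  have hne : (nhdsWithin t ((Set.Ioi t) \ {t})).NeBot := by
    rw [Set.diff_singleton_eq_self (by simp)]
    exact nhdsGT_neBot t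
  refine ge_of_tendsto h1 ?_
  filter_upwards [self_mem_nhdsWithin] with x hx
  have hxt : t < x := hx.1
  have hle : g t ≤ g x := hg ht (lt_trans ht hxt) hxt.le
  rw [slope_def_field]
  exact div_nonneg (by linarith) (by linarith)


/-- Lemma 2.14: given a strictly decreasing positive sequence `a_n → 0` and a positive
increasing `C²` function `f` with `f(s) → ∞`, `s f'(s)/f(s)^r → 0` and `f'/f^r` strictly
decreasing (for all `r > 1`), the radial mollifiers
`ρ̃_n(t) = a_n f'(V(t)) / f(V(t))^{a_n+1}` satisfy Condition 3 associated to `V`. -/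
theorem mollifiers_from_f_satisfy_condition3
    -- `V` is a `C¹` strictly increasing function on `[0,∞)` with `V(t) → ∞`
    (V : ℝ → ℝ) (hV0 : 0 ≤ V 0) (hVmono : StrictMonoOn V (Set.Ici 0))
    (hVC1 : ContDiffOn ℝ 1 V (Set.Ici 0)) (hVtop : Tendsto V atTop atTop)
    (a : ℕ → ℝ) (ha_pos : ∀ n, 0 < a n) (ha_anti : StrictAnti a)
    (ha_lim : Tendsto a atTop (nhds 0))
    (f : ℝ → ℝ)
    (hf_pos : ∀ s > (0:ℝ), 0 < f s)
    (hf_mono : MonotoneOn f (Set.Ioi 0))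
    (hf_C2 : ContDiffOn ℝ 2 f (Set.Ioi 0))
    -- (i)
    (hf_top : Tendsto f atTop atTop)
    -- (ii)
    (hf_ratio_lim : ∀ r : ℝ, 1 < r →
      Tendsto (fun s => s * deriv f s / f s ^ r) atTop (nhds 0))
    -- (iii)
    (hf_ratio_anti : ∀ r : ℝ, 1 < r →
      StrictAntiOn (fun s => deriv f s / f s ^ r) (Set.Ioi 0)) :
    -- each `ρ̃_n` is `C¹` on `(0,∞)`
    (∀ n, ContDiffOn ℝ 1 (fun t => a n * deriv f (V t) / f (V t) ^ (a n + 1)) (Set.Ioi 0)) ∧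
    -- each `ρ̃_n` is strictly decreasing on `(0,∞)`
    (∀ n, StrictAntiOn (fun t => a n * deriv f (V t) / f (V t) ^ (a n + 1)) (Set.Ioi 0)) ∧
    -- Condition 3 (A)
    (∀ r > (0:ℝ), Tendsto (fun n => a n * deriv f (V r) / f (V r) ^ (a n + 1))
      atTop (nhds 0)) ∧
    (∀ n, Tendsto (fun t => (a n * deriv f (V t) / f (V t) ^ (a n + 1)) * V t)
      atTop (nhds 0)) ∧
    -- Condition 3 (B)
    (∀ i j : ℕ, i < j →
      MonotoneOn (fun t => (a j * deriv f (V t) / f (V t) ^ (a j + 1)) /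
        (a i * deriv f (V t) / f (V t) ^ (a i + 1))) (Set.Ioi 0)) ∧
    -- Condition 3 (C)
    (∃ I : ℝ → ℝ,
      (∀ R > (0:ℝ), Tendsto (fun n => ∫ t in Set.Ioi R,
          deriv V t * (a n * deriv f (V t) / f (V t) ^ (a n + 1))) atTop (nhds (I R))) ∧
      Tendsto I atTop (nhds 1)) := by
  -- basic positivity facts
  have hVt : ∀ t > (0:ℝ), 0 < V t := fun t ht =>
    lt_of_le_of_lt hV0 (hVmono (le_refl (0:ℝ)) ht.le ht)
  have hfV : ∀ t > (0:ℝ), 0 < f (V t) := fun t ht => hf_pos _ (hVt t ht)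
  have hVd : ∀ t > (0:ℝ), HasDerivAt V (deriv V t) t := by
    intro t ht
    have h := hVC1.contDiffAt (Ici_mem_nhds ht)
    exact (h.differentiableAt one_ne_zero).hasDerivAt
  have hfd : ∀ s > (0:ℝ), HasDerivAt f (deriv f s) s := by
    intro s hs
    have h := hf_C2.contDiffAt (isOpen_Ioi.mem_nhds hs)
    exact (h.differentiableAt two_ne_zero).hasDerivAt
  have hf'nonneg : ∀ s > (0:ℝ), 0 ≤ deriv f s := fun s hs =>
    aux_deriv_nonneg hs hf_mono (hfd s hs)
  have hf'pos : ∀ s > (0:ℝ), 0 < deriv f s := by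
    intro s hs
    rcases lt_or_eq_of_le (hf'nonneg s hs) with h | h
    · exact h
    · exfalso
      have h2 := hf_ratio_anti 2 one_lt_two hs (show s + 1 ∈ Set.Ioi (0:ℝ) by
        simp; linarith) (by linarith)
      have hfs : (0:ℝ) < f s ^ (2:ℝ) := Real.rpow_pos_of_pos (hf_pos s hs) _
      have hfs1 : (0:ℝ) < f (s+1) ^ (2:ℝ) := Real.rpow_pos_of_pos (hf_pos _ (by linarith)) _
      have : deriv f (s+1) / f (s+1) ^ (2:ℝ) < 0 := by
        simpa [← h] using h2
      have := hf'nonneg (s+1) (by linarith)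
      nlinarith [div_nonneg this hfs1.le]
  have hV'nonneg : ∀ t > (0:ℝ), 0 ≤ deriv V t := fun t ht =>
    aux_deriv_nonneg ht ((hVmono.monotoneOn).mono (Set.Ioi_subset_Ici_self)) (hVd t ht)
  have hVmaps : Set.MapsTo V (Set.Ioi 0) (Set.Ioi 0) := fun t ht => hVt t ht
  have hVIoi : ContDiffOn ℝ 1 V (Set.Ioi 0) := hVC1.mono Set.Ioi_subset_Ici_self
  have hfVtop : Tendsto (fun t => f (V t)) atTop atTop := hf_top.comp hVtop
  refine ⟨?_, ?_, ?_, ?_, ?_, ?_⟩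
  · -- C¹
    intro n
    have hnum : ContDiffOn ℝ 1 (fun t => a n * deriv f (V t)) (Set.Ioi 0) :=
      contDiffOn_const.mul
        ((hf_C2.deriv_of_isOpen isOpen_Ioi le_rfl).comp hVIoi hVmaps)
    have hden : ContDiffOn ℝ 1 (fun t => f (V t) ^ (a n + 1)) (Set.Ioi 0) :=
      ContDiffOn.rpow ((hf_C2.of_le one_le_two).comp hVIoi hVmaps) contDiffOn_const
        (fun t ht => (hfV t ht).ne')
    exact hnum.div hden (fun t ht => (Real.rpow_pos_of_pos (hfV t ht) _).ne')
  · -- strict anti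
    intro n t1 ht1 t2 ht2 h12
    have h := hf_ratio_anti (a n + 1) (by linarith [ha_pos n]) (hVt t1 ht1) (hVt t2 ht2)
      (hVmono (Set.mem_Ici.mpr (le_of_lt ht1)) (Set.mem_Ici.mpr (le_of_lt ht2)) h12)
    simp only [mul_div_assoc]
    exact mul_lt_mul_of_pos_left h (ha_pos n)
  · -- (A) first
    intro r hr
    have hc : (0:ℝ) < f (V r) := hfV r hr
    have h1 : Tendsto (fun n => f (V r) ^ (a n + 1)) atTop (nhds (f (V r) ^ (1:ℝ))) :=
      (Real.continuousAt_const_rpow hc.ne').tendsto.comp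
        (by simpa using ha_lim.add (tendsto_const_nhds (x := (1:ℝ))))
    have h2 : Tendsto (fun n => a n * deriv f (V r) / f (V r) ^ (a n + 1)) atTop
        (nhds (0 * deriv f (V r) / f (V r) ^ (1:ℝ))) :=
      (ha_lim.mul tendsto_const_nhds).div h1 (by positivity)
    simpa using h2
  · -- (A) second
    intro n
    have h := (hf_ratio_lim (a n + 1) (by linarith [ha_pos n])).comp hVtop
    have h2 := h.const_mul (a n)
    rw [mul_zero] at h2
    refine h2.congr (fun t => ?_)
    simp only [Function.comp]
    ring
  · -- (B)
    intro i j hij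
    have haij : a j < a i := ha_anti hij
    have key : ∀ t ∈ Set.Ioi (0:ℝ),
        (a j * deriv f (V t) / f (V t) ^ (a j + 1)) /
          (a i * deriv f (V t) / f (V t) ^ (a i + 1))
        = (a j / a i) * f (V t) ^ (a i - a j) := by
      intro t ht
      have hF := hfV t ht
      have hd := hf'pos (V t) (hVt t ht)
      have hFj : (0:ℝ) < f (V t) ^ (a j + 1) := Real.rpow_pos_of_pos hF _
      have hFi : (0:ℝ) < f (V t) ^ (a i + 1) := Real.rpow_pos_of_pos hF _
      have e1 : f (V t) ^ (a i + 1) = f (V t) ^ (a i - a j) * f (V t) ^ (a j + 1) := by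
        rw [← Real.rpow_add hF]; ring_nf
      have hai : a i ≠ 0 := (ha_pos i).ne'
      have hd' : deriv f (V t) ≠ 0 := hd.ne'
      rw [div_div_div_eq, e1,
        div_eq_iff (mul_pos hFj (mul_pos (ha_pos i) hd)).ne']
      field_simp
    intro t1 ht1 t2 ht2 h12
    have h1 := key t1 ht1
    have h2 := key t2 ht2
    simp only [h1, h2]
    have hmono : f (V t1) ≤ f (V t2) :=
      hf_mono (hVt t1 ht1) (hVt t2 ht2) (hVmono.monotoneOn (Set.mem_Ici.mpr (le_of_lt ht1)) (Set.mem_Ici.mpr (le_of_lt ht2)) h12)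
    refine mul_le_mul_of_nonneg_left ?_ (div_nonneg (ha_pos j).le (ha_pos i).le)
    exact Real.rpow_le_rpow (hfV t1 ht1).le hmono (by linarith)
  · -- (C)
    refine ⟨fun _ => 1, ?_, tendsto_const_nhds⟩
    intro R hR
    have key : ∀ n, (∫ t in Set.Ioi R,
        deriv V t * (a n * deriv f (V t) / f (V t) ^ (a n + 1))) = f (V R) ^ (-(a n)) := by
      intro n
      set g : ℝ → ℝ := fun t => -(f (V t) ^ (-(a n))) with hg
      have hderiv : ∀ t ∈ Set.Ici R, HasDerivAt g
          (deriv V t * (a n * deriv f (V t) / f (V t) ^ (a n + 1))) t := by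
        intro t ht
        have htpos : 0 < t := lt_of_lt_of_le hR ht
        have hF := hfV t htpos
        have hcomp : HasDerivAt (fun t => f (V t)) (deriv f (V t) * deriv V t) t :=
          (hfd (V t) (hVt t htpos)).comp t (hVd t htpos)
        have hr := (hcomp.rpow_const (p := -(a n)) (Or.inl hF.ne')).neg
        refine hr.congr_deriv ?_
        rw [show (-(a n) - 1) = -(a n + 1) by ring, Real.rpow_neg hF.le, div_eq_mul_inv]
        ring
      have hnonneg : ∀ t ∈ Set.Ioi R,
          0 ≤ deriv V t * (a n * deriv f (V t) / f (V t) ^ (a n + 1)) := by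
        intro t ht
        have htpos : 0 < t := lt_trans hR ht
        have := hf'pos (V t) (hVt t htpos)
        have hF := Real.rpow_pos_of_pos (hfV t htpos) (a n + 1)
        exact mul_nonneg (hV'nonneg t htpos)
          (div_nonneg (mul_nonneg (ha_pos n).le this.le) hF.le)
      have hlim : Tendsto g atTop (nhds 0) := by
        have := (tendsto_rpow_neg_atTop (ha_pos n)).comp hfVtop
        simpa using this.neg
      have := integral_Ioi_of_hasDerivAt_of_nonneg' hderiv hnonneg hlim
      rw [this]
      simp [hg]
    simp only [key]
    have hc : (0:ℝ) < f (V R) := hfV R hR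
    have h1 : Tendsto (fun n => f (V R) ^ (-(a n))) atTop (nhds (f (V R) ^ (0:ℝ))) :=
      (Real.continuousAt_const_rpow hc.ne').tendsto.comp (by simpa using ha_lim.neg)
    simpa using h1
end
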